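/- arXiv:1709.05800 — 8 statements merged into one kernel-verified Lean document; each statement's English description precedes it below -/
import Mathlib

section
/- Let Γ be a finite simple graph and let π = {C₁, …, C_t, D} be a partition of V(Γ) satisfying: (i) {C₁, …, C_t} is an equitable partition of the induced subgraph on V(Γ) \ D, and (ii) for every x ∈ D and every i ∈ [t], the vertex x has either 0, |C_i|/2, or |C_i| neighbors in C_i. Let sw_π Γ be the graph obtained from Γ by interchanging adjacency and nonadjacency between each x ∈ D and the vertices of C_i whenever x has exactly |C_i|/2 neighbors in C_i. Then the adjacency matrices of Γ and of sw_π Γ have the same spectrum (the graphs are cospectral). -/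
open Classical Matrix Kronecker

/-- The number of neighbors of `x` inside the set `c`. -/
noncomputable def nbrCount {V : Type*} (G : SimpleGraph V) (x : V) (c : Finset V) : ℕ :=
  (c.filter fun y => G.Adj x y).card

/-- `{C i} ∪ {D}` is a partition of the vertex set (all cells nonempty, pairwise
disjoint, covering). -/
def IsPartitionWithCell {V ι : Type*} (C : ι → Finset V) (D : Finset V) : Prop :=
  (∀ i, (C i).Nonempty) ∧ D.Nonempty ∧
    Pairwise (fun i j => Disjoint (C i) (C j)) ∧
    (∀ i, Disjoint (C i) D) ∧ ∀ x : V, x ∈ D ∨ ∃ i, x ∈ C i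

/-- The family of cells `C` is equitable for `G` : any two vertices of a cell `C i`
have the same number of neighbors in each cell `C j`. -/
def IsEquitableOn {V ι : Type*} (G : SimpleGraph V) (C : ι → Finset V) : Prop :=
  ∀ i j, ∀ x ∈ C i, ∀ y ∈ C i, nbrCount G x (C j) = nbrCount G y (C j)

/-- Every vertex of `D` has `0`, `|C i|/2` or `|C i|` neighbors in each cell `C i`. -/
def GMhalf {V ι : Type*} (G : SimpleGraph V) (C : ι → Finset V) (D : Finset V) : Prop :=
  ∀ x ∈ D, ∀ i, nbrCount G x (C i) = 0 ∨ 2 * nbrCount G x (C i) = (C i).card ∨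
    nbrCount G x (C i) = (C i).card

/-- `π = {C₁, …, C_t, D}` is a Godsil–McKay partition of `G` with Godsil–McKay cell `D`. -/
def IsGMPartition {V ι : Type*} (G : SimpleGraph V) (C : ι → Finset V) (D : Finset V) : Prop :=
  IsPartitionWithCell C D ∧ IsEquitableOn G C ∧ GMhalf G C D

/-- The graph obtained from `G` by Godsil–McKay switching with respect to the
partition `{C₁, …, C_t, D}` : adjacency and nonadjacency between `x ∈ D` and the
vertices of `C i` are interchanged whenever `x` has exactly `|C i|/2` neighbors in `C i`. -/
def GMswitch {V ι : Type*} (G : SimpleGraph V) (C : ι → Finset V) (D : Finset V) :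
    SimpleGraph V where
  Adj x y := x ≠ y ∧ Xor' (G.Adj x y)
    (∃ i, (x ∈ D ∧ y ∈ C i ∧ 2 * nbrCount G x (C i) = (C i).card) ∨
          (y ∈ D ∧ x ∈ C i ∧ 2 * nbrCount G y (C i) = (C i).card))
  symm := by
    constructor
    rintro x y ⟨hne, h⟩
    refine ⟨hne.symm, ?_⟩
    have h1 : (G.Adj y x) = (G.Adj x y) := propext (G.adj_comm y x)
    have h2 : (∃ i, (y ∈ D ∧ x ∈ C i ∧ 2 * nbrCount G y (C i) = (C i).card) ∨
          (x ∈ D ∧ y ∈ C i ∧ 2 * nbrCount G x (C i) = (C i).card)) =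
        (∃ i, (x ∈ D ∧ y ∈ C i ∧ 2 * nbrCount G x (C i) = (C i).card) ∨
          (y ∈ D ∧ x ∈ C i ∧ 2 * nbrCount G y (C i) = (C i).card)) :=
      propext (exists_congr fun i => or_comm)
    rw [h1, h2]
    exact h
  loopless := by constructor; rintro x ⟨hne, -⟩; exact hne rfl

/-- The adjacency matrix of a graph, with rational entries. -/
noncomputable def adjM {V : Type*} (G : SimpleGraph V) : Matrix V V ℚ :=
  Matrix.of fun x y => if G.Adj x y then 1 else 0

/-- The all-one matrix. -/
def allOnes (V : Type*) : Matrix V V ℚ := Matrix.of fun _ _ => 1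

/-- The switching matrix `Q` of the partition `{C₁, …, C_t, D}` :
`Q x y = 2/|C i| - δ_{x y}` if `x, y ∈ C i`, `Q x y = δ_{x y}` if `x, y ∈ D`,
and `Q x y = 0` otherwise. -/
noncomputable def switchMatrix {V ι : Type*} (C : ι → Finset V) (D : Finset V) :
    Matrix V V ℚ :=
  Matrix.of fun x y =>
    if h : ∃ i, x ∈ C i ∧ y ∈ C i then
      2 / ((C h.choose).card : ℚ) - (if x = y then 1 else 0)
    else if x ∈ D ∧ y ∈ D then (if x = y then 1 else 0) else 0

/-- The characteristic matrix of a family of cells: `S x i = 1` iff `x ∈ C i`. -/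
noncomputable def charMat {V ι : Type*} (C : ι → Finset V) : Matrix V ι ℚ :=
  Matrix.of fun x i => if x ∈ C i then 1 else 0

/-- `A₀ = I`, `A₁ = A(G)`, `A₂ = J - I - A(G)`. -/
noncomputable def stdMats {V : Type*} [DecidableEq V] (G : SimpleGraph V) :
    Fin 3 → Matrix V V ℚ :=
  ![1, adjM G, allOnes V - 1 - adjM G]

/-- The three basic relations: `i = 0` : equality, `i = 1` : adjacency,
`i = 2` : distinct nonadjacency. -/
def relOfIdx {V : Type*} (G : SimpleGraph V) (i : Fin 3) (x y : V) : Prop :=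
  (i = 0 ∧ x = y) ∨ (i = 1 ∧ G.Adj x y) ∨ (i = 2 ∧ x ≠ y ∧ ¬ G.Adj x y)

lemma relOfIdx_symm {V : Type*} {G : SimpleGraph V} {i : Fin 3} {x y : V}
    (h : relOfIdx G i x y) : relOfIdx G i y x := by
  rcases h with ⟨hi, h⟩ | ⟨hi, h⟩ | ⟨hi, h1, h2⟩
  · exact Or.inl ⟨hi, h.symm⟩
  · exact Or.inr (Or.inl ⟨hi, h.symm⟩)
  · exact Or.inr (Or.inr ⟨hi, h1.symm, fun hadj => h2 hadj.symm⟩)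

/-- The unified graph product of type `[0 s₀₁ s₀₂; s₁₀ s₁₁ s₁₂; s₂₀ s₂₁ s₂₂]` :
the graph on `V × W` whose adjacency matrix is `Σ_{i,j} s i j • (A_i ⊗ B_j)`. -/
def unifiedProd {V W : Type*} (G : SimpleGraph V) (H : SimpleGraph W)
    (s : Fin 3 → Fin 3 → ℚ) : SimpleGraph (V × W) where
  Adj p q := p ≠ q ∧ ∃ i j, s i j = 1 ∧ relOfIdx G i p.1 q.1 ∧ relOfIdx H j p.2 q.2
  symm := by
    constructor
    rintro p q ⟨hne, i, j, hs, hi, hj⟩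
    exact ⟨hne.symm, i, j, hs, relOfIdx_symm hi, relOfIdx_symm hj⟩
  loopless := by constructor; rintro p ⟨hne, -⟩; exact hne rfl

lemma charpoly_conj_of_invol {n R : Type*} [CommRing R] [Fintype n] [DecidableEq n]
    (Q A : Matrix n n R) (hQ : Q * Q = 1) : (Q * A * Q).charpoly = A.charpoly := by
  have hQ' : (Polynomial.C : R →+* Polynomial R).mapMatrix Q *
      (Polynomial.C : R →+* Polynomial R).mapMatrix Q = 1 := by
    rw [← RingHom.map_mul, hQ, RingHom.map_one]
  have hcm : charmatrix (Q * A * Q) =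
      (Polynomial.C : R →+* Polynomial R).mapMatrix Q * charmatrix A *
        (Polynomial.C : R →+* Polynomial R).mapMatrix Q := by
    rw [charmatrix, charmatrix, mul_sub, sub_mul, RingHom.map_mul, RingHom.map_mul]
    congr 1
    have hs : Matrix.scalar n (Polynomial.X : Polynomial R)
        = (Polynomial.X : Polynomial R) • (1 : Matrix n n (Polynomial R)) := by
      ext i j
      simp [Matrix.scalar_apply, Matrix.one_apply, Matrix.diagonal_apply, mul_comm]
    rw [hs, mul_smul_comm, smul_mul_assoc, mul_one, hQ']
  rw [Matrix.charpoly, Matrix.charpoly, hcm, det_mul, det_mul]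
  have h1 : ((Polynomial.C : R →+* Polynomial R).mapMatrix Q).det *
      ((Polynomial.C : R →+* Polynomial R).mapMatrix Q).det = 1 := by
    rw [← det_mul, hQ', det_one]
  calc ((Polynomial.C : R →+* Polynomial R).mapMatrix Q).det * (charmatrix A).det *
        ((Polynomial.C : R →+* Polynomial R).mapMatrix Q).det
      = (((Polynomial.C : R →+* Polynomial R).mapMatrix Q).det *
        ((Polynomial.C : R →+* Polynomial R).mapMatrix Q).det) * (charmatrix A).det := by ring
    _ = (charmatrix A).det := by rw [h1, one_mul]

section GMaux

variable {V : Type*} [Fintype V] [DecidableEq V] {t : ℕ}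
variable {G : SimpleGraph V} {C : Fin t → Finset V} {D : Finset V}

lemma cell_unique (hP : IsPartitionWithCell C D) {i j : Fin t} {x : V}
    (hi : x ∈ C i) (hj : x ∈ C j) : i = j := by
  by_contra h
  exact Finset.disjoint_left.mp (hP.2.2.1 h) hi hj

lemma cell_notD (hP : IsPartitionWithCell C D) {i : Fin t} {x : V} (hi : x ∈ C i) : x ∉ D :=
  fun hx => Finset.disjoint_left.mp (hP.2.2.2.1 i) hi hx

lemma cardC_pos (hP : IsPartitionWithCell C D) (i : Fin t) : 0 < ((C i).card : ℚ) := by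
  exact_mod_cast Finset.card_pos.mpr (hP.1 i)

lemma Q_D (hP : IsPartitionWithCell C D) {x : V} (hx : x ∈ D) (y : V) :
    switchMatrix C D x y = if x = y then 1 else 0 := by
  have hnc : ¬ ∃ i, x ∈ C i ∧ y ∈ C i := by
    rintro ⟨i, hxi, -⟩; exact cell_notD hP hxi hx
  unfold switchMatrix
  rw [Matrix.of_apply, dif_neg hnc]
  by_cases hy : y ∈ D
  · simp [hx, hy]
  · have hxy : x ≠ y := fun h => hy (h ▸ hx)
    simp [hy, hxy]

lemma Q_cell (hP : IsPartitionWithCell C D) {x y : V} {i : Fin t}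
    (hx : x ∈ C i) (hy : y ∈ C i) :
    switchMatrix C D x y = 2 / ((C i).card : ℚ) - (if x = y then 1 else 0) := by
  have h : ∃ j, x ∈ C j ∧ y ∈ C j := ⟨i, hx, hy⟩
  have hch : h.choose = i := cell_unique hP h.choose_spec.1 hx
  unfold switchMatrix
  rw [Matrix.of_apply, dif_pos h, hch]
  congr 1
  convert rfl

lemma Q_zero (hP : IsPartitionWithCell C D) {x y : V} {i : Fin t}
    (hx : x ∈ C i) (hy : y ∉ C i) :
    switchMatrix C D x y = 0 := by
  have hnc : ¬ ∃ j, x ∈ C j ∧ y ∈ C j := by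
    rintro ⟨j, hxj, hyj⟩
    exact hy ((cell_unique hP hxj hx) ▸ hyj)
  unfold switchMatrix
  rw [Matrix.of_apply, dif_neg hnc, if_neg (fun h => cell_notD hP hx h.1)]

lemma Q_symm (hP : IsPartitionWithCell C D) (x y : V) :
    switchMatrix C D x y = switchMatrix C D y x := by
  rcases hP.2.2.2.2 x with hx | ⟨i, hx⟩
  · rcases hP.2.2.2.2 y with hy | ⟨j, hy⟩
    · rw [Q_D hP hx, Q_D hP hy]
      by_cases h : x = y
      · rw [if_pos h, if_pos h.symm]
      · rw [if_neg h, if_neg (fun h' => h h'.symm)]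
    · rw [Q_zero hP hy (fun h => cell_notD hP h hx),
        Q_D hP hx, if_neg (fun h : x = y => cell_notD hP hy (h ▸ hx))]
  · rcases hP.2.2.2.2 y with hy | ⟨j, hy⟩
    · rw [Q_zero hP hx (fun h => cell_notD hP h hy),
        Q_D hP hy, if_neg (fun h : y = x => cell_notD hP hx (h ▸ hy))]
    · by_cases hij : i = j
      · subst hij
        rw [Q_cell hP hx hy, Q_cell hP hy hx]
        congr 1
        exact if_congr eq_comm rfl rfl
      · rw [Q_zero hP hx (fun h => hij (cell_unique hP h hy)),
          Q_zero hP hy (fun h => hij (cell_unique hP hx h))]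

lemma rowsum_D (hP : IsPartitionWithCell C D) {x : V} (hx : x ∈ D) (f : V → ℚ) :
    ∑ z, switchMatrix C D x z * f z = f x := by
  have : ∀ z, switchMatrix C D x z * f z = (if x = z then 1 else 0) * f z :=
    fun z => by rw [Q_D hP hx]
  rw [Finset.sum_congr rfl fun z _ => this z]
  simp

lemma rowsum_cell (hP : IsPartitionWithCell C D) {x : V} {i : Fin t} (hx : x ∈ C i)
    (f : V → ℚ) :
    ∑ z, switchMatrix C D x z * f z
      = (2 / ((C i).card : ℚ)) * ∑ z ∈ C i, f z - f x := by
  rw [← Finset.sum_subset (Finset.subset_univ (C i))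
    (fun z _ hz => by rw [Q_zero hP hx hz, zero_mul])]
  have : ∀ z ∈ C i, switchMatrix C D x z * f z
      = (2 / ((C i).card : ℚ)) * f z - (if x = z then 1 else 0) * f z := by
    intro z hz
    rw [Q_cell hP hx hz, sub_mul]
  rw [Finset.sum_congr rfl this, Finset.sum_sub_distrib, ← Finset.mul_sum]
  congr 1
  simp [hx]


lemma sum_adj_left (w : V) (i : Fin t) :
    ∑ z ∈ C i, adjM G z w = (nbrCount G w (C i) : ℚ) := by
  have h : ∀ z ∈ C i, adjM G z w = if G.Adj w z then (1:ℚ) else 0 := by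
    intro z _
    unfold adjM
    rw [Matrix.of_apply]
    exact if_congr (G.adj_comm z w) rfl rfl
  rw [Finset.sum_congr rfl h, Finset.sum_boole, nbrCount]

lemma sum_adj_right (x : V) (j : Fin t) :
    ∑ w ∈ C j, adjM G x w = (nbrCount G x (C j) : ℚ) := by
  have h : ∀ w ∈ C j, adjM G x w = if G.Adj x w then (1:ℚ) else 0 := fun w _ => rfl
  rw [Finset.sum_congr rfl h, Finset.sum_boole, nbrCount]

lemma double_count (i j : Fin t) :
    ∑ w ∈ C j, (nbrCount G w (C i) : ℚ) = ∑ z ∈ C i, (nbrCount G z (C j) : ℚ) := by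
  have h1 : ∀ w ∈ C j, (nbrCount G w (C i) : ℚ) = ∑ z ∈ C i, adjM G z w :=
    fun w _ => (sum_adj_left w i).symm
  have h2 : ∀ z ∈ C i, (nbrCount G z (C j) : ℚ) = ∑ w ∈ C j, adjM G z w :=
    fun z _ => (sum_adj_right z j).symm
  rw [Finset.sum_congr rfl h1, Finset.sum_congr rfl h2, Finset.sum_comm]

lemma adjM_eq_one {x y : V} (h : G.Adj x y) : adjM G x y = 1 := if_pos h

lemma adjM_symm (x y : V) : adjM G x y = adjM G y x := by
  unfold adjM
  rw [Matrix.of_apply, Matrix.of_apply]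
  exact if_congr (G.adj_comm x y) rfl rfl

lemma nbr_zero_not_adj {x y : V} {i : Fin t} (hy : y ∈ C i)
    (h : nbrCount G x (C i) = 0) : ¬ G.Adj x y := by
  intro hadj
  have : y ∈ (C i).filter fun z => G.Adj x z := Finset.mem_filter.mpr ⟨hy, hadj⟩
  rw [nbrCount] at h
  simp [Finset.card_eq_zero.mp h] at this

lemma nbr_full_adj {x y : V} {i : Fin t} (hy : y ∈ C i)
    (h : nbrCount G x (C i) = (C i).card) : G.Adj x y := by
  rw [nbrCount] at h
  have := Finset.eq_of_subset_of_card_le (Finset.filter_subset _ _) (le_of_eq h.symm)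
  rw [← this] at hy
  exact (Finset.mem_filter.mp hy).2

/-- entries of the switched adjacency matrix when neither endpoint is in `D` -/
lemma adjM_switch_cells (hP : IsPartitionWithCell C D) {x y : V} {i j : Fin t}
    (hx : x ∈ C i) (hy : y ∈ C j) :
    adjM (GMswitch G C D) x y = adjM G x y := by
  have hPf : ¬ ∃ k, (x ∈ D ∧ y ∈ C k ∧ 2 * nbrCount G x (C k) = (C k).card) ∨
      (y ∈ D ∧ x ∈ C k ∧ 2 * nbrCount G y (C k) = (C k).card) := by
    rintro ⟨k, ⟨hxD, -, -⟩ | ⟨hyD, -, -⟩⟩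
    exacts [cell_notD hP hx hxD, cell_notD hP hy hyD]
  have hiff : (GMswitch G C D).Adj x y ↔ G.Adj x y := by
    constructor
    · rintro ⟨hne, h⟩
      rcases h with ⟨ha, -⟩ | ⟨hb, -⟩
      · exact ha
      · exact absurd hb hPf
    · intro h
      exact ⟨h.ne, Or.inl ⟨h, hPf⟩⟩
  unfold adjM
  rw [Matrix.of_apply, Matrix.of_apply]
  exact if_congr hiff rfl rfl

lemma adjM_switch_D_D (hP : IsPartitionWithCell C D) {x y : V}
    (hx : x ∈ D) (hy : y ∈ D) :
    adjM (GMswitch G C D) x y = adjM G x y := by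
  have hPf : ¬ ∃ k, (x ∈ D ∧ y ∈ C k ∧ 2 * nbrCount G x (C k) = (C k).card) ∨
      (y ∈ D ∧ x ∈ C k ∧ 2 * nbrCount G y (C k) = (C k).card) := by
    rintro ⟨k, ⟨-, hyk, -⟩ | ⟨-, hxk, -⟩⟩
    exacts [cell_notD hP hyk hy, cell_notD hP hxk hx]
  have hiff : (GMswitch G C D).Adj x y ↔ G.Adj x y := by
    constructor
    · rintro ⟨hne, h⟩
      rcases h with ⟨ha, -⟩ | ⟨hb, -⟩
      · exact ha
      · exact absurd hb hPf
    · intro h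
      exact ⟨h.ne, Or.inl ⟨h, hPf⟩⟩
  unfold adjM
  rw [Matrix.of_apply, Matrix.of_apply]
  exact if_congr hiff rfl rfl

/-- switched case : `x ∈ D`, `y ∈ C j`, `2 nbr = card` -/
lemma adjM_switch_half (hP : IsPartitionWithCell C D) {x y : V} {j : Fin t}
    (hx : x ∈ D) (hy : y ∈ C j) (h2 : 2 * nbrCount G x (C j) = (C j).card) :
    adjM (GMswitch G C D) x y = 1 - adjM G x y := by
  have hne : x ≠ y := fun h => cell_notD hP hy (h ▸ hx)
  have hPt : ∃ k, (x ∈ D ∧ y ∈ C k ∧ 2 * nbrCount G x (C k) = (C k).card) ∨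
      (y ∈ D ∧ x ∈ C k ∧ 2 * nbrCount G y (C k) = (C k).card) :=
    ⟨j, Or.inl ⟨hx, hy, h2⟩⟩
  have hiff : (GMswitch G C D).Adj x y ↔ ¬ G.Adj x y := by
    constructor
    · rintro ⟨-, h⟩
      rcases h with ⟨-, hb⟩ | ⟨-, hb⟩
      · exact absurd hPt hb
      · exact hb
    · intro h
      exact ⟨hne, Or.inr ⟨hPt, h⟩⟩
  unfold adjM
  rw [Matrix.of_apply, Matrix.of_apply]
  rw [if_congr hiff rfl rfl]
  by_cases h : G.Adj x y
  · rw [if_neg (not_not_intro h), if_pos h]; ring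
  · rw [if_pos h, if_neg h]; ring

/-- non-switched case : `x ∈ D`, `y ∈ C j`, `2 nbr ≠ card` -/
lemma adjM_switch_nohalf (hP : IsPartitionWithCell C D) {x y : V} {j : Fin t}
    (hx : x ∈ D) (hy : y ∈ C j) (h2 : 2 * nbrCount G x (C j) ≠ (C j).card) :
    adjM (GMswitch G C D) x y = adjM G x y := by
  have hPf : ¬ ∃ k, (x ∈ D ∧ y ∈ C k ∧ 2 * nbrCount G x (C k) = (C k).card) ∨
      (y ∈ D ∧ x ∈ C k ∧ 2 * nbrCount G y (C k) = (C k).card) := by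
    rintro ⟨k, ⟨-, hyk, hk⟩ | ⟨hyD, -, -⟩⟩
    · exact h2 ((cell_unique hP hyk hy) ▸ hk)
    · exact cell_notD hP hy hyD
  have hiff : (GMswitch G C D).Adj x y ↔ G.Adj x y := by
    constructor
    · rintro ⟨hne, h⟩
      rcases h with ⟨ha, -⟩ | ⟨hb, -⟩
      · exact ha
      · exact absurd hb hPf
    · intro h
      exact ⟨h.ne, Or.inl ⟨h, hPf⟩⟩
  unfold adjM
  rw [Matrix.of_apply, Matrix.of_apply]
  exact if_congr hiff rfl rfl

lemma adjM_switch_symm (x y : V) :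
    adjM (GMswitch G C D) x y = adjM (GMswitch G C D) y x := by
  unfold adjM
  rw [Matrix.of_apply, Matrix.of_apply]
  exact if_congr ((GMswitch G C D).adj_comm x y) rfl rfl

lemma QQ_eq_one (hP : IsPartitionWithCell C D) :
    switchMatrix C D * switchMatrix C D = 1 := by
  ext x y
  rw [Matrix.mul_apply]
  rcases hP.2.2.2.2 x with hx | ⟨i, hx⟩
  · rw [rowsum_D hP hx (fun z => switchMatrix C D z y), Q_D hP hx, Matrix.one_apply]
  · rw [rowsum_cell hP hx (fun z => switchMatrix C D z y)]
    by_cases hy : y ∈ C i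
    · have hsum : ∑ z ∈ C i, switchMatrix C D z y = 1 := by
        have h : ∀ z ∈ C i, switchMatrix C D z y
            = 2 / ((C i).card : ℚ) - (if z = y then 1 else 0) := fun z hz => Q_cell hP hz hy
        rw [Finset.sum_congr rfl h, Finset.sum_sub_distrib, Finset.sum_const]
        have h1 : ∑ z ∈ C i, (if z = y then (1:ℚ) else 0) = 1 := by simp [hy]
        rw [h1, nsmul_eq_mul]
        have hc : ((C i).card : ℚ) ≠ 0 := (cardC_pos hP i).ne'
        field_simp
        norm_num
      rw [hsum, Q_cell hP hx hy, Matrix.one_apply]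
      ring
    · have hsum : ∑ z ∈ C i, switchMatrix C D z y = 0 :=
        Finset.sum_eq_zero fun z hz => Q_zero hP hz hy
      rw [hsum, Q_zero hP hx hy, Matrix.one_apply_ne (fun h : x = y => hy (h ▸ hx))]
      ring

lemma QAQ_eq (hGM : IsGMPartition G C D) :
    switchMatrix C D * adjM G * switchMatrix C D = adjM (GMswitch G C D) := by
  obtain ⟨hP, hEq, hH⟩ := hGM
  ext x y
  have hQA_D : ∀ x' ∈ D, ∀ w, (switchMatrix C D * adjM G) x' w = adjM G x' w := by
    intro x' hx' w
    rw [Matrix.mul_apply]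
    exact rowsum_D hP hx' _
  have hQA_C : ∀ (i : Fin t), ∀ x' ∈ C i, ∀ w, (switchMatrix C D * adjM G) x' w
      = 2 / ((C i).card : ℚ) * (nbrCount G w (C i) : ℚ) - adjM G x' w := by
    intro i x' hx' w
    rw [Matrix.mul_apply, rowsum_cell hP hx', sum_adj_left]
  have hmain : (switchMatrix C D * adjM G * switchMatrix C D) x y
      = ∑ w, switchMatrix C D y w * (switchMatrix C D * adjM G) x w := by
    rw [Matrix.mul_apply]
    exact Finset.sum_congr rfl fun w _ => by rw [Q_symm hP w y, mul_comm]
  rw [hmain]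
  rcases hP.2.2.2.2 x with hx | ⟨i, hx⟩
  · rcases hP.2.2.2.2 y with hy | ⟨j, hy⟩
    · rw [rowsum_D hP hy, hQA_D x hx y, adjM_switch_D_D hP hx hy]
    · rw [rowsum_cell hP hy, hQA_D x hx y]
      have hs : ∑ w ∈ C j, (switchMatrix C D * adjM G) x w = (nbrCount G x (C j) : ℚ) := by
        rw [Finset.sum_congr rfl fun w _ => hQA_D x hx w]
        exact sum_adj_right x j
      rw [hs]
      have hcard : (C j).card ≠ 0 := Finset.card_ne_zero_of_mem hy
      have hcq : ((C j).card : ℚ) ≠ 0 := (cardC_pos hP j).ne'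
      rcases hH x hx j with h0 | hhalf | hfull
      · have hA : adjM G x y = 0 := if_neg (nbr_zero_not_adj hy h0)
        rw [adjM_switch_nohalf hP hx hy (by omega), hA, h0]
        norm_num
      · rw [adjM_switch_half hP hx hy hhalf]
        have h1 : 2 / ((C j).card : ℚ) * (nbrCount G x (C j) : ℚ) = 1 := by
          rw [div_mul_eq_mul_div, div_eq_one_iff_eq hcq]
          exact_mod_cast hhalf
        rw [h1]
      · have hA : adjM G x y = 1 := adjM_eq_one (nbr_full_adj hy hfull)
        rw [adjM_switch_nohalf hP hx hy (by omega), hA, hfull]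
        rw [div_mul_cancel₀ _ hcq]
        norm_num
  · rcases hP.2.2.2.2 y with hy | ⟨j, hy⟩
    · rw [rowsum_D hP hy, hQA_C i x hx y, adjM_switch_symm x y, adjM_symm x y]
      have hcard : (C i).card ≠ 0 := Finset.card_ne_zero_of_mem hx
      have hcq : ((C i).card : ℚ) ≠ 0 := (cardC_pos hP i).ne'
      rcases hH y hy i with h0 | hhalf | hfull
      · have hA : adjM G y x = 0 := if_neg (nbr_zero_not_adj hx h0)
        rw [adjM_switch_nohalf hP hy hx (by omega), hA, h0]
        norm_num
      · rw [adjM_switch_half hP hy hx hhalf]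
        have h1 : 2 / ((C i).card : ℚ) * (nbrCount G y (C i) : ℚ) = 1 := by
          rw [div_mul_eq_mul_div, div_eq_one_iff_eq hcq]
          exact_mod_cast hhalf
        rw [h1]
      · have hA : adjM G y x = 1 := adjM_eq_one (nbr_full_adj hx hfull)
        rw [adjM_switch_nohalf hP hy hx (by omega), hA, hfull]
        rw [div_mul_cancel₀ _ hcq]
        norm_num
    · rw [rowsum_cell hP hy]
      have hs : ∑ w ∈ C j, (switchMatrix C D * adjM G) x w
          = 2 / ((C i).card : ℚ) * ∑ w ∈ C j, (nbrCount G w (C i) : ℚ)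
            - (nbrCount G x (C j) : ℚ) := by
        rw [Finset.sum_congr rfl fun w _ => hQA_C i x hx w, Finset.sum_sub_distrib,
          ← Finset.mul_sum, sum_adj_right]
      have hbji : ∑ w ∈ C j, (nbrCount G w (C i) : ℚ)
          = ((C j).card : ℚ) * (nbrCount G y (C i) : ℚ) := by
        have hcg : ∀ w ∈ C j, (nbrCount G w (C i) : ℚ) = (nbrCount G y (C i) : ℚ) :=
          fun w hw => by exact_mod_cast hEq j i w hw y hy
        rw [Finset.sum_congr rfl hcg, Finset.sum_const, nsmul_eq_mul]
      have hbij : ∑ w ∈ C j, (nbrCount G w (C i) : ℚ)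
          = ((C i).card : ℚ) * (nbrCount G x (C j) : ℚ) := by
        rw [double_count]
        have hcg : ∀ z ∈ C i, (nbrCount G z (C j) : ℚ) = (nbrCount G x (C j) : ℚ) :=
          fun z hz => by exact_mod_cast hEq i j z hz x hx
        rw [Finset.sum_congr rfl hcg, Finset.sum_const, nsmul_eq_mul]
      have hS : ((C i).card : ℚ) * (nbrCount G x (C j) : ℚ)
          = ((C j).card : ℚ) * (nbrCount G y (C i) : ℚ) := by
        rw [← hbij, hbji]
      rw [hs, hQA_C i x hx y, adjM_switch_cells hP hx hy, hbij]
      have hci : ((C i).card : ℚ) ≠ 0 := (cardC_pos hP i).ne'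
      have hcj : ((C j).card : ℚ) ≠ 0 := (cardC_pos hP j).ne'
      have key : 2 / ((C j).card : ℚ) *
          (2 / ((C i).card : ℚ) * (((C i).card : ℚ) * (nbrCount G x (C j) : ℚ))
            - (nbrCount G x (C j) : ℚ))
          = 2 / ((C i).card : ℚ) * (nbrCount G y (C i) : ℚ) := by
        have e1 : 2 / ((C i).card : ℚ) * (((C i).card : ℚ) * (nbrCount G x (C j) : ℚ))
            = 2 * (nbrCount G x (C j) : ℚ) := by
          field_simp
        rw [e1]
        have e2 : 2 * (nbrCount G x (C j) : ℚ) - (nbrCount G x (C j) : ℚ)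
            = (nbrCount G x (C j) : ℚ) := by ring
        rw [e2, div_mul_eq_mul_div, div_mul_eq_mul_div, div_eq_div_iff hcj hci]
        linear_combination 2 * hS
      rw [key]
      ring

end GMaux


/-- a graph and its Godsil–McKay switch are cospectral. -/
theorem GMswitch_cospectral {V : Type*} [Fintype V] [DecidableEq V]
    (G : SimpleGraph V) {t : ℕ} (C : Fin t → Finset V) (D : Finset V)
    (hGM : IsGMPartition G C D) :
    (adjM G).charpoly = (adjM (GMswitch G C D)).charpoly := by
  rw [← QAQ_eq hGM]
  exact (charpoly_conj_of_invol _ _ (QQ_eq_one hGM.1)).symm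
end

section
/- Let Γ be a finite simple graph with a Godsil–McKay partition π = {C₁, …, C_t, D} (with Godsil–McKay cell D), let sw_π Γ be the graph obtained by Godsil–McKay switching, and let Q be the switching matrix with respect to π. Then A(sw_π Γ) = Q A(Γ) Q, where A denotes the adjacency matrix (regarded as a rational matrix). -/
open Classical Matrix Kronecker

section GMaux

variable {V : Type*} {t : ℕ} {C : Fin t → Finset V} {D : Finset V}

lemma cell_eq (hd : Pairwise fun i j => Disjoint (C i) (C j)) {i j : Fin t} {x : V}
    (hi : x ∈ C i) (hj : x ∈ C j) : i = j := by
  by_contra h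
  exact (Finset.disjoint_left.mp (hd h)) hi hj

lemma switchMatrix_C (hd : Pairwise fun i j => Disjoint (C i) (C j))
    (hCD : ∀ i, Disjoint (C i) D) {i : Fin t} {x : V} (hx : x ∈ C i) (z : V) :
    switchMatrix C D x z =
      (if z ∈ C i then 2 / ((C i).card : ℚ) else 0) - (if x = z then 1 else 0) := by
  unfold switchMatrix
  simp only [Matrix.of_apply]
  by_cases hz : z ∈ C i
  · have h : ∃ j, x ∈ C j ∧ z ∈ C j := ⟨i, hx, hz⟩
    rw [dif_pos h]
    have : h.choose = i := cell_eq hd h.choose_spec.1 hx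
    rw [this, if_pos hz]
  · have h : ¬ ∃ j, x ∈ C j ∧ z ∈ C j := by
      rintro ⟨j, hxj, hzj⟩
      exact hz (cell_eq hd hxj hx ▸ hzj)
    rw [dif_neg h, if_neg hz]
    have hxD : x ∉ D := Finset.disjoint_left.mp (hCD i) hx
    have hxz : x ≠ z := by rintro rfl; exact hz hx
    simp [hxD, hxz]

lemma switchMatrix_C' (hd : Pairwise fun i j => Disjoint (C i) (C j))
    (hCD : ∀ i, Disjoint (C i) D) {i : Fin t} {y : V} (hy : y ∈ C i) (z : V) :
    switchMatrix C D z y =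
      (if z ∈ C i then 2 / ((C i).card : ℚ) else 0) - (if z = y then 1 else 0) := by
  unfold switchMatrix
  simp only [Matrix.of_apply]
  by_cases hz : z ∈ C i
  · have h : ∃ j, z ∈ C j ∧ y ∈ C j := ⟨i, hz, hy⟩
    rw [dif_pos h]
    have : h.choose = i := cell_eq hd h.choose_spec.2 hy
    rw [this, if_pos hz]
  · have h : ¬ ∃ j, z ∈ C j ∧ y ∈ C j := by
      rintro ⟨j, hzj, hyj⟩
      exact hz (cell_eq hd hyj hy ▸ hzj)
    rw [dif_neg h, if_neg hz]
    have hyD : y ∉ D := Finset.disjoint_left.mp (hCD i) hy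
    have hzy : z ≠ y := by rintro rfl; exact hz hy
    simp [hyD, hzy]

lemma switchMatrix_D (hCD : ∀ i, Disjoint (C i) D) {x : V} (hx : x ∈ D) (z : V) :
    switchMatrix C D x z = if x = z then 1 else 0 := by
  unfold switchMatrix
  simp only [Matrix.of_apply]
  have h : ¬ ∃ j, x ∈ C j ∧ z ∈ C j := by
    rintro ⟨j, hxj, -⟩
    exact Finset.disjoint_right.mp (hCD j) hx hxj
  rw [dif_neg h]
  by_cases hz : z ∈ D
  · rw [if_pos ⟨hx, hz⟩]
  · have hxz : x ≠ z := by rintro rfl; exact hz hx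
    simp [hz, hxz]

lemma switchMatrix_D' (hCD : ∀ i, Disjoint (C i) D) {y : V} (hy : y ∈ D) (z : V) :
    switchMatrix C D z y = if z = y then 1 else 0 := by
  unfold switchMatrix
  simp only [Matrix.of_apply]
  have h : ¬ ∃ j, z ∈ C j ∧ y ∈ C j := by
    rintro ⟨j, -, hyj⟩
    exact Finset.disjoint_right.mp (hCD j) hy hyj
  rw [dif_neg h]
  by_cases hz : z ∈ D
  · rw [if_pos ⟨hz, hy⟩]
  · have hzy : z ≠ y := by rintro rfl; exact hz hy
    simp [hz, hzy]

variable [Fintype V] [DecidableEq V]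

lemma Qmul_D (hCD : ∀ i, Disjoint (C i) D) (M : Matrix V V ℚ) {x : V} (hx : x ∈ D)
    (y : V) : (switchMatrix C D * M) x y = M x y := by
  rw [Matrix.mul_apply]
  simp [switchMatrix_D hCD hx, ite_mul]

lemma mulQ_D (hCD : ∀ i, Disjoint (C i) D) (M : Matrix V V ℚ) {y : V} (hy : y ∈ D)
    (x : V) : (M * switchMatrix C D) x y = M x y := by
  rw [Matrix.mul_apply]
  simp [switchMatrix_D' hCD hy, mul_ite]

lemma Qmul_C (hd : Pairwise fun i j => Disjoint (C i) (C j))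
    (hCD : ∀ i, Disjoint (C i) D) (M : Matrix V V ℚ) {i : Fin t} {x : V}
    (hx : x ∈ C i) (y : V) :
    (switchMatrix C D * M) x y =
      (2 / ((C i).card : ℚ)) * ∑ z ∈ C i, M z y - M x y := by
  rw [Matrix.mul_apply]
  simp only [switchMatrix_C hd hCD hx, sub_mul, ite_mul, zero_mul, one_mul]
  rw [Finset.sum_sub_distrib, Finset.sum_ite_mem, Finset.univ_inter,
    Finset.sum_ite_eq, if_pos (Finset.mem_univ x), Finset.mul_sum]

lemma mulQ_C (hd : Pairwise fun i j => Disjoint (C i) (C j))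
    (hCD : ∀ i, Disjoint (C i) D) (M : Matrix V V ℚ) {j : Fin t} {y : V}
    (hy : y ∈ C j) (x : V) :
    (M * switchMatrix C D) x y =
      (2 / ((C j).card : ℚ)) * ∑ w ∈ C j, M x w - M x y := by
  rw [Matrix.mul_apply]
  simp only [switchMatrix_C' hd hCD hy, mul_sub, mul_ite, mul_zero, mul_one]
  rw [Finset.sum_sub_distrib, Finset.sum_ite_mem, Finset.univ_inter,
    Finset.sum_ite_eq', if_pos (Finset.mem_univ y), Finset.mul_sum]
  congr 1
  exact Finset.sum_congr rfl fun w _ => mul_comm _ _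

lemma sum_adjM_right (G : SimpleGraph V) (x : V) (s : Finset V) :
    ∑ w ∈ s, adjM G x w = (nbrCount G x s : ℚ) := by
  unfold adjM nbrCount
  simp [Finset.sum_boole]

lemma sum_adjM_left (G : SimpleGraph V) (y : V) (s : Finset V) :
    ∑ z ∈ s, adjM G z y = (nbrCount G y s : ℚ) := by
  unfold adjM nbrCount
  simp only [Matrix.of_apply]
  simp_rw [G.adj_comm]
  simp [Finset.sum_boole]

lemma nbrCount_eq_sum (G : SimpleGraph V) (x : V) (s : Finset V) :
    nbrCount G x s = ∑ z ∈ s, if G.Adj x z then 1 else 0 := by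
  unfold nbrCount
  rw [Finset.card_filter]

lemma edge_count {G : SimpleGraph V} (hEq : IsEquitableOn G C) {i j : Fin t} {x y : V}
    (hx : x ∈ C i) (hy : y ∈ C j) :
    (C j).card * nbrCount G y (C i) = (C i).card * nbrCount G x (C j) := by
  have h1 : ∑ w ∈ C j, nbrCount G w (C i) = (C j).card * nbrCount G y (C i) := by
    rw [Finset.sum_congr rfl fun w hw => hEq j i w hw y hy]
    simp [mul_comm]
  have h2 : ∑ z ∈ C i, nbrCount G z (C j) = (C i).card * nbrCount G x (C j) := by
    rw [Finset.sum_congr rfl fun z hz => hEq i j z hz x hx]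
    simp [mul_comm]
  rw [← h1, ← h2]
  simp_rw [nbrCount_eq_sum]
  rw [Finset.sum_comm]
  apply Finset.sum_congr rfl; intro z _
  apply Finset.sum_congr rfl; intro w _
  rw [G.adj_comm]

lemma GMswitch_adj_of_not_ex {G : SimpleGraph V} {x y : V}
    (hex : ¬ ∃ i, (x ∈ D ∧ y ∈ C i ∧ 2 * nbrCount G x (C i) = (C i).card) ∨
      (y ∈ D ∧ x ∈ C i ∧ 2 * nbrCount G y (C i) = (C i).card)) :
    adjM (GMswitch G C D) x y = adjM G x y := by
  have key : (GMswitch G C D).Adj x y ↔ G.Adj x y := by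
    show x ≠ y ∧ Xor' _ _ ↔ _
    rw [Xor']
    constructor
    · rintro ⟨-, ⟨h, -⟩ | ⟨h, -⟩⟩
      · exact h
      · exact absurd h hex
    · intro h
      exact ⟨G.ne_of_adj h, Or.inl ⟨h, hex⟩⟩
  simp only [adjM, Matrix.of_apply, key]

lemma GMswitch_adj_of_ex {G : SimpleGraph V} {x y : V} (hxy : x ≠ y)
    (hex : ∃ i, (x ∈ D ∧ y ∈ C i ∧ 2 * nbrCount G x (C i) = (C i).card) ∨
      (y ∈ D ∧ x ∈ C i ∧ 2 * nbrCount G y (C i) = (C i).card)) :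
    adjM (GMswitch G C D) x y = 1 - adjM G x y := by
  have key : (GMswitch G C D).Adj x y ↔ ¬ G.Adj x y := by
    show x ≠ y ∧ Xor' _ _ ↔ _
    rw [Xor']
    constructor
    · rintro ⟨-, ⟨-, h⟩ | ⟨-, h⟩⟩
      · exact absurd hex h
      · exact h
    · intro h
      exact ⟨hxy, Or.inr ⟨hex, h⟩⟩
  simp only [adjM, Matrix.of_apply, key]
  by_cases h : G.Adj x y <;> simp [h]

end GMaux

/-- `A(sw_π Γ) = Q A(Γ) Q`. -/
theorem adjM_GMswitch_eq_conj {V : Type*} [Fintype V] [DecidableEq V]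
    (G : SimpleGraph V) {t : ℕ} (C : Fin t → Finset V) (D : Finset V)
    (hGM : IsGMPartition G C D) :
    adjM (GMswitch G C D) = switchMatrix C D * adjM G * switchMatrix C D := by
  obtain ⟨⟨hne, hDne, hd, hCD, hcov⟩, hEq, hHalf⟩ := hGM
  have hcard : ∀ i, ((C i).card : ℚ) ≠ 0 := fun i =>
    Nat.cast_ne_zero.mpr (Finset.card_ne_zero.mpr (hne i))
  have hcard0 : ∀ i, (C i).card ≠ 0 := fun i => Finset.card_ne_zero.mpr (hne i)
  ext x y
  rcases hcov x with hxD | ⟨i, hxi⟩ <;> rcases hcov y with hyD | ⟨j, hyj⟩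
  · -- x ∈ D, y ∈ D
    rw [mulQ_D hCD _ hyD, Qmul_D hCD _ hxD]
    apply GMswitch_adj_of_not_ex
    rintro ⟨i, ⟨-, hy', -⟩ | ⟨-, hx', -⟩⟩
    · exact Finset.disjoint_right.mp (hCD i) hyD hy'
    · exact Finset.disjoint_right.mp (hCD i) hxD hx'
  · -- x ∈ D, y ∈ C j
    have hxy : x ≠ y := by
      rintro rfl
      exact Finset.disjoint_right.mp (hCD j) hxD hyj
    rw [mulQ_C hd hCD _ hyj]
    simp only [Qmul_D hCD (adjM G) hxD]
    rw [sum_adjM_right]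
    rcases hHalf x hxD j with h0 | hhalf | hfull
    · have hna : ¬ G.Adj x y := by
        intro h
        have : y ∈ (C j).filter fun z => G.Adj x z := Finset.mem_filter.mpr ⟨hyj, h⟩
        simp only [nbrCount, Finset.card_eq_zero] at h0
        rw [h0] at this
        exact absurd this (Finset.notMem_empty y)
      rw [GMswitch_adj_of_not_ex]
      · simp [adjM, hna, h0]
      · rintro ⟨k, ⟨-, hy', hk⟩ | ⟨hy', -, -⟩⟩
        · rw [cell_eq hd hy' hyj] at hk
          rw [h0] at hk
          exact hcard0 j hk.symm
        · exact Finset.disjoint_right.mp (hCD j) hy' hyj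
    · rw [GMswitch_adj_of_ex hxy ⟨j, Or.inl ⟨hxD, hyj, hhalf⟩⟩]
      have h2 : (2 : ℚ) * (nbrCount G x (C j) : ℚ) = ((C j).card : ℚ) := by
        exact_mod_cast hhalf
      rw [sub_left_inj, div_mul_eq_mul_div, eq_div_iff (hcard j), one_mul]
      exact h2.symm
    · have ha : G.Adj x y := by
        have hsub : (C j).filter (fun z => G.Adj x z) = C j :=
          Finset.eq_of_subset_of_card_le (Finset.filter_subset _ _) (le_of_eq hfull.symm)
        have : y ∈ (C j).filter fun z => G.Adj x z := by rw [hsub]; exact hyj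
        exact (Finset.mem_filter.mp this).2
      rw [GMswitch_adj_of_not_ex]
      · rw [hfull]
        have : (2 : ℚ) / ((C j).card : ℚ) * ((C j).card : ℚ) = 2 := by
          field_simp
        rw [this]
        simp [adjM, ha]
        norm_num
      · rintro ⟨k, ⟨-, hy', hk⟩ | ⟨hy', -, -⟩⟩
        · rw [cell_eq hd hy' hyj] at hk
          rw [hfull] at hk
          exact hcard0 j (by omega)
        · exact Finset.disjoint_right.mp (hCD j) hy' hyj
  · -- x ∈ C i, y ∈ D
    have hxy : x ≠ y := by
      rintro rfl
      exact Finset.disjoint_right.mp (hCD i) hyD hxi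
    rw [mulQ_D hCD _ hyD, Qmul_C hd hCD _ hxi, sum_adjM_left]
    rcases hHalf y hyD i with h0 | hhalf | hfull
    · have hna : ¬ G.Adj x y := by
        intro h
        have : x ∈ (C i).filter fun z => G.Adj y z :=
          Finset.mem_filter.mpr ⟨hxi, h.symm⟩
        simp only [nbrCount, Finset.card_eq_zero] at h0
        rw [h0] at this
        exact absurd this (Finset.notMem_empty x)
      rw [GMswitch_adj_of_not_ex]
      · simp [adjM, hna, h0]
      · rintro ⟨k, ⟨hx', -, -⟩ | ⟨-, hx', hk⟩⟩
        · exact Finset.disjoint_right.mp (hCD i) hx' hxi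
        · rw [cell_eq hd hx' hxi] at hk
          rw [h0] at hk
          exact hcard0 i hk.symm
    · rw [GMswitch_adj_of_ex hxy ⟨i, Or.inr ⟨hyD, hxi, hhalf⟩⟩]
      have h2 : (2 : ℚ) * (nbrCount G y (C i) : ℚ) = ((C i).card : ℚ) := by
        exact_mod_cast hhalf
      rw [sub_left_inj, div_mul_eq_mul_div, eq_div_iff (hcard i), one_mul]
      exact h2.symm
    · have ha : G.Adj x y := by
        have hsub : (C i).filter (fun z => G.Adj y z) = C i :=
          Finset.eq_of_subset_of_card_le (Finset.filter_subset _ _) (le_of_eq hfull.symm)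
        have : x ∈ (C i).filter fun z => G.Adj y z := by rw [hsub]; exact hxi
        exact ((Finset.mem_filter.mp this).2).symm
      rw [GMswitch_adj_of_not_ex]
      · rw [hfull]
        have : (2 : ℚ) / ((C i).card : ℚ) * ((C i).card : ℚ) = 2 := by
          field_simp
        rw [this]
        simp [adjM, ha]
        norm_num
      · rintro ⟨k, ⟨hx', -, -⟩ | ⟨-, hx', hk⟩⟩
        · exact Finset.disjoint_right.mp (hCD i) hx' hxi
        · rw [cell_eq hd hx' hxi] at hk
          rw [hfull] at hk
          exact hcard0 i (by omega)
  · -- x ∈ C i, y ∈ C j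
    rw [mulQ_C hd hCD _ hyj]
    simp only [Qmul_C hd hCD (adjM G) hxi]
    simp only [sum_adjM_left]
    have hconst : ∀ w ∈ C j, (nbrCount G w (C i) : ℚ) = (nbrCount G y (C i) : ℚ) :=
      fun w hw => by exact_mod_cast hEq j i w hw y hyj
    rw [Finset.sum_sub_distrib, sum_adjM_right]
    rw [Finset.sum_congr rfl fun w hw => by rw [hconst w hw], Finset.sum_const]
    have hedge : ((C j).card : ℚ) * (nbrCount G y (C i) : ℚ) =
        ((C i).card : ℚ) * (nbrCount G x (C j) : ℚ) := by
      exact_mod_cast edge_count hEq hxi hyj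
    rw [GMswitch_adj_of_not_ex]
    · set e : ℚ := (nbrCount G y (C i) : ℚ) with he
      set f : ℚ := (nbrCount G x (C j) : ℚ) with hf
      set ni : ℚ := ((C i).card : ℚ) with hni
      set nj : ℚ := ((C j).card : ℚ) with hnj
      have key : 2 / ni * e = 2 / nj * f := by
        rw [div_mul_eq_mul_div, div_mul_eq_mul_div, div_eq_div_iff (hcard i) (hcard j)]
        linear_combination 2 * hedge
      rw [nsmul_eq_mul]
      rw [key]
      have h2 : nj * (2 / nj * f) = 2 * f := by
        field_simp
        exact mul_div_cancel_left₀ f (hcard j)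
      rw [h2]
      ring
    · rintro ⟨k, ⟨hx', -, -⟩ | ⟨hy', -, -⟩⟩
      · exact Finset.disjoint_right.mp (hCD i) hx' hxi
      · exact Finset.disjoint_right.mp (hCD j) hy' hyj
end

section
/- Let Γ and Δ be finite simple graphs and let ⋆ be the unified graph product of any fixed type [0 s₀₁ s₀₂; s₁₀ s₁₁ s₁₂; s₂₀ s₂₁ s₂₂] with s_{ij} ∈ {0,1}. If π = {C₁, …, C_t} is an equitable partition of V(Γ), then Π = {C_i × {w} : i ∈ [t], w ∈ V(Δ)} is an equitable partition of the product graph Γ ⋆ Δ. -/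
open Classical Matrix Kronecker

noncomputable def ridx {V : Type*} (G : SimpleGraph V) (x y : V) : Fin 3 :=
  if x = y then 0 else if G.Adj x y then 1 else 2

lemma relOfIdx_iff {V : Type*} (G : SimpleGraph V) (i : Fin 3) (x y : V) :
    relOfIdx G i x y ↔ i = ridx G x y := by
  unfold relOfIdx ridx
  by_cases h : x = y
  · subst h; simp [G.irrefl]
  · by_cases h2 : G.Adj x y
    · simp [h, h2]
    · simp [h, h2]

lemma unified_adj_iff {V W : Type*} (G : SimpleGraph V) (H : SimpleGraph W)
    (s : Fin 3 → Fin 3 → ℚ) (hs00 : s 0 0 = 0) (p q : V × W) :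
    (unifiedProd G H s).Adj p q ↔ s (ridx G p.1 q.1) (ridx H p.2 q.2) = 1 := by
  constructor
  · rintro ⟨hne, i, j, h1, h2, h3⟩
    rw [relOfIdx_iff] at h2 h3
    rw [← h2, ← h3]; exact h1
  · intro h
    refine ⟨?_, _, _, h, (relOfIdx_iff _ _ _ _).2 rfl, (relOfIdx_iff _ _ _ _).2 rfl⟩
    rintro rfl
    have e1 : ridx G p.1 p.1 = 0 := by simp [ridx]
    have e2 : ridx H p.2 p.2 = 0 := by simp [ridx]
    rw [e1, e2, hs00] at h
    exact absurd h (by norm_num)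

lemma filter_ridx_card {V : Type*} [DecidableEq V] (G : SimpleGraph V) (T : Finset V)
    (s : Fin 3 → Fin 3 → ℚ) (k : Fin 3) (a : V) :
    (T.filter fun c => s (ridx G a c) k = 1).card =
      (if s 0 k = 1 then (T.filter fun c => a = c).card else 0) +
      (if s 1 k = 1 then nbrCount G a T else 0) +
      (if s 2 k = 1 then (T.filter fun c => a ≠ c ∧ ¬ G.Adj a c).card else 0) := by
  classical
  have key : ∀ c ∈ T, (if s (ridx G a c) k = 1 then (1:ℕ) else 0) =
      (if a = c ∧ s 0 k = 1 then 1 else 0) + (if G.Adj a c ∧ s 1 k = 1 then 1 else 0) +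
      (if (a ≠ c ∧ ¬ G.Adj a c) ∧ s 2 k = 1 then 1 else 0) := by
    intro c _
    unfold ridx
    by_cases h : a = c
    · subst h; simp [G.irrefl]
    · by_cases h2 : G.Adj a c
      · simp [h, h2]
      · simp [h, h2]
  rw [Finset.card_filter, Finset.sum_congr rfl key, Finset.sum_add_distrib,
    Finset.sum_add_distrib, ← Finset.card_filter, ← Finset.card_filter, ← Finset.card_filter]
  congr 1
  · congr 1
    · by_cases h : s 0 k = 1 <;> simp [h]
    · by_cases h : s 1 k = 1 <;> simp [h, nbrCount]
  · by_cases h : s 2 k = 1 <;> simp [h]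

lemma count_split {V : Type*} [DecidableEq V] (G : SimpleGraph V) (T : Finset V) (a : V) :
    (T.filter fun c => a = c).card + nbrCount G a T +
      (T.filter fun c => a ≠ c ∧ ¬ G.Adj a c).card = T.card := by
  classical
  have h1 : (T.filter fun c => a = c ∨ G.Adj a c).card +
      (T.filter fun c => ¬ (a = c ∨ G.Adj a c)).card = T.card :=
    Finset.card_filter_add_card_filter_not _
  have h2 : (T.filter fun c => a = c ∨ G.Adj a c) =
      (T.filter fun c => a = c) ∪ (T.filter fun c => G.Adj a c) :=
    Finset.filter_or _ _ _
  have h3 : Disjoint (T.filter fun c => a = c) (T.filter fun c => G.Adj a c) := by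
    rw [Finset.disjoint_left]
    intro c hc0 hc1
    rw [Finset.mem_filter] at hc0 hc1
    exact G.irrefl (hc0.2 ▸ hc1.2)
  have h4 : (T.filter fun c => ¬ (a = c ∨ G.Adj a c)) =
      (T.filter fun c => a ≠ c ∧ ¬ G.Adj a c) := by
    apply Finset.filter_congr
    intro c _
    push_neg
    rfl
  rw [h2, Finset.card_union_of_disjoint h3, h4] at h1
  rw [← h1]
  rfl

lemma filter_eq_card {V : Type*} [DecidableEq V] (T : Finset V) (a : V) :
    (T.filter fun c => a = c).card = if a ∈ T then 1 else 0 := by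
  classical
  have : (T.filter fun c => a = c) = (T.filter fun c => c = a) := by
    apply Finset.filter_congr; intro c _; exact ⟨Eq.symm, Eq.symm⟩
  rw [this, Finset.filter_eq']
  by_cases h : a ∈ T <;> simp [h]

lemma filter_ridx_card_eq {V : Type*} [DecidableEq V] (G : SimpleGraph V) (T : Finset V)
    (s : Fin 3 → Fin 3 → ℚ) (k : Fin 3) (a b : V) (hmem : (a ∈ T) ↔ (b ∈ T))
    (hnbr : nbrCount G a T = nbrCount G b T) :
    (T.filter fun c => s (ridx G a c) k = 1).card = (T.filter fun c => s (ridx G b c) k = 1).card := by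
  rw [filter_ridx_card, filter_ridx_card]
  have e0 : (T.filter fun c => a = c).card = (T.filter fun c => b = c).card := by
    rw [filter_eq_card, filter_eq_card]
    by_cases h : a ∈ T
    · rw [if_pos h, if_pos (hmem.1 h)]
    · rw [if_neg h, if_neg (fun hb => h (hmem.2 hb))]
  have e2 : (T.filter fun c => a ≠ c ∧ ¬ G.Adj a c).card =
      (T.filter fun c => b ≠ c ∧ ¬ G.Adj b c).card := by
    have ha := count_split G T a
    have hb := count_split G T b
    omega
  rw [e0, e2, hnbr]

/-- an equitable partition of `Γ` induces an equitable partition of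
`Γ ⋆ Δ` for the unified product of any type. -/
theorem equitable_unifiedProd {V W : Type*} [Fintype V] [DecidableEq V]
    [Fintype W] [DecidableEq W] (G : SimpleGraph V) (H : SimpleGraph W)
    (s : Fin 3 → Fin 3 → ℚ) (hs : ∀ i j, s i j = 0 ∨ s i j = 1) (hs00 : s 0 0 = 0)
    {t : ℕ} (C : Fin t → Finset V)
    (hne : ∀ i, (C i).Nonempty)
    (hdisj : Pairwise fun i j => Disjoint (C i) (C j))
    (hcover : ∀ x : V, ∃ i, x ∈ C i)
    (heq : IsEquitableOn G C) :
    IsEquitableOn (unifiedProd G H s)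
      (fun c : Fin t × W => C c.1 ×ˢ ({c.2} : Finset W)) := by
  rintro ⟨i1, w⟩ ⟨j1, w'⟩ x hx y hy
  simp only [Finset.mem_product, Finset.mem_singleton] at hx hy
  obtain ⟨hx1, hx2⟩ := hx
  obtain ⟨hy1, hy2⟩ := hy
  have key : ∀ z : V × W, z.2 = w →
      nbrCount (unifiedProd G H s) z (C j1 ×ˢ ({w'} : Finset W)) =
      ((C j1).filter fun c => s (ridx G z.1 c) (ridx H w w') = 1).card := by
    intro z hz
    unfold nbrCount
    rw [Finset.product_singleton, Finset.filter_map, Finset.card_map]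
    congr 1
    apply Finset.filter_congr
    intro c _
    simp only [Function.comp, Function.Embedding.coeFn_mk, eq_iff_iff]
    rw [unified_adj_iff G H s hs00, hz]
  rw [key x hx2, key y hy2]
  have hmem : (x.1 ∈ C j1) ↔ (y.1 ∈ C j1) := by
    by_cases h : i1 = j1
    · subst h; simp [hx1, hy1]
    · have hd := hdisj h
      constructor
      · intro hxj; exact absurd hxj (Finset.disjoint_left.1 hd hx1)
      · intro hyj; exact absurd hyj (Finset.disjoint_left.1 hd hy1)
  have hnbr : nbrCount G x.1 (C j1) = nbrCount G y.1 (C j1) := heq i1 j1 x.1 hx1 y.1 hy1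
  exact filter_ridx_card_eq G (C j1) s (ridx H w w') x.1 y.1 hmem hnbr
end

section
/- Let Γ be a finite simple graph with a Godsil–McKay partition π = {C₁, …, C_t, D} (Godsil–McKay cell D), let Δ be a finite simple graph, and let ⋆ be the unified graph product of any fixed type. Set C_i^{(w)} = C_i × {w} for w ∈ V(Δ), 𝒟 = D × V(Δ), and Π = {C_i^{(w)} : i ∈ [t], w ∈ V(Δ)} ∪ {𝒟}. Then Π is a Godsil–McKay partition of the product graph Γ ⋆ Δ with Godsil–McKay cell 𝒟. -/
open Classical Matrix Kronecker

/-- The index of the relation holding between `x` and `y`. -/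
noncomputable def idx3 {V : Type*} (G : SimpleGraph V) (x y : V) : Fin 3 :=
  if x = y then 0 else if G.Adj x y then 1 else 2

lemma relOfIdx_iff_idx3 {V : Type*} (G : SimpleGraph V) (i : Fin 3) (x y : V) :
    relOfIdx G i x y ↔ i = idx3 G x y := by
  constructor
  · rintro (⟨rfl, rfl⟩ | ⟨rfl, h⟩ | ⟨rfl, h1, h2⟩)
    · simp [idx3]
    · simp [idx3, G.ne_of_adj h, h]
    · simp [idx3, h1, h2]
  · rintro rfl
    unfold idx3 relOfIdx
    split_ifs with h1 h2
    · exact Or.inl ⟨rfl, h1⟩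
    · exact Or.inr (Or.inl ⟨rfl, h2⟩)
    · exact Or.inr (Or.inr ⟨rfl, h1, h2⟩)

lemma unifiedProd_adj_iff {V W : Type*} (G : SimpleGraph V) (H : SimpleGraph W)
    (s : Fin 3 → Fin 3 → ℚ) (hs00 : s 0 0 = 0) (x y : V) (w w' : W) :
    (unifiedProd G H s).Adj (x, w) (y, w') ↔ s (idx3 G x y) (idx3 H w w') = 1 := by
  constructor
  · rintro ⟨hne, i, j, h1, h2, h3⟩
    rw [relOfIdx_iff_idx3] at h2 h3
    subst h2; subst h3; exact h1
  · intro h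
    refine ⟨?_, idx3 G x y, idx3 H w w', h, (relOfIdx_iff_idx3 G _ x y).mpr rfl,
      (relOfIdx_iff_idx3 H _ w w').mpr rfl⟩
    rintro hpq
    rw [Prod.mk.injEq] at hpq
    obtain ⟨rfl, rfl⟩ := hpq
    simp [idx3] at h
    rw [hs00] at h
    norm_num at h

lemma nbrCount_unifiedProd {V W : Type*} [DecidableEq V] [DecidableEq W]
    (G : SimpleGraph V) (H : SimpleGraph W)
    (s : Fin 3 → Fin 3 → ℚ) (hs00 : s 0 0 = 0) (x : V) (w w' : W) (c : Finset V) :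
    nbrCount (unifiedProd G H s) (x, w) (c ×ˢ ({w'} : Finset W)) =
      (if s 0 (idx3 H w w') = 1 ∧ x ∈ c then 1 else 0)
      + (if s 1 (idx3 H w w') = 1 then nbrCount G x c else 0)
      + (if s 2 (idx3 H w w') = 1 then
          c.card - (if x ∈ c then 1 else 0) - nbrCount G x c else 0) := by
  classical
  set j0 := idx3 H w w' with hj0
  have himg : (c ×ˢ ({w'} : Finset W)).filter (fun q => (unifiedProd G H s).Adj (x, w) q)
      = ((c.filter fun y => (unifiedProd G H s).Adj (x, w) (y, w')).image
          (fun y => (y, w'))) := by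
    ext ⟨a, b⟩
    simp only [Finset.mem_filter, Finset.mem_product, Finset.mem_singleton,
      Finset.mem_image]
    constructor
    · rintro ⟨⟨ha, rfl⟩, hadj⟩
      exact ⟨a, ⟨ha, hadj⟩, rfl⟩
    · rintro ⟨y, ⟨hy, hadj⟩, heq⟩
      rw [Prod.mk.injEq] at heq
      obtain ⟨rfl, rfl⟩ := heq
      exact ⟨⟨hy, rfl⟩, hadj⟩
  have hinj : Function.Injective (fun y : V => (y, w')) := by
    intro a b h; simpa using h
  rw [nbrCount, himg, Finset.card_image_of_injective _ hinj]
  have hadj : ∀ y, (unifiedProd G H s).Adj (x, w) (y, w') ↔ s (idx3 G x y) j0 = 1 :=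
    fun y => unifiedProd_adj_iff G H s hs00 x y w w'
  rw [Finset.filter_congr (fun y _ => by rw [hadj y]), Finset.card_filter]
  have step : ∀ y ∈ c, (if s (idx3 G x y) j0 = 1 then (1 : ℕ) else 0) =
      (if x = y ∧ s 0 j0 = 1 then 1 else 0) + (if G.Adj x y ∧ s 1 j0 = 1 then 1 else 0)
      + (if (¬x = y ∧ ¬G.Adj x y) ∧ s 2 j0 = 1 then 1 else 0) := by
    intro y _
    by_cases h1 : x = y
    · subst h1
      simp [idx3]
    · by_cases h2 : G.Adj x y <;> simp [idx3, h1, h2]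
  rw [Finset.sum_congr rfl step, Finset.sum_add_distrib, Finset.sum_add_distrib]
  have hA : (∑ y ∈ c, if x = y then (1 : ℕ) else 0) = if x ∈ c then 1 else 0 :=
    Finset.sum_ite_eq c x (fun _ => 1)
  have hB : (∑ y ∈ c, if G.Adj x y then (1 : ℕ) else 0) = nbrCount G x c := by
    rw [nbrCount, Finset.card_filter]
  have htot : (if x ∈ c then (1 : ℕ) else 0) + nbrCount G x c
      + (∑ y ∈ c, if ¬x = y ∧ ¬G.Adj x y then (1 : ℕ) else 0) = c.card := by
    rw [← hA, ← hB, ← Finset.sum_add_distrib, ← Finset.sum_add_distrib,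
      Finset.card_eq_sum_ones]
    refine Finset.sum_congr rfl fun y _ => ?_
    by_cases h1 : x = y
    · subst h1; simp
    · by_cases h2 : G.Adj x y <;> simp [h1, h2]
  by_cases h0 : s 0 j0 = 1 <;> by_cases h1 : s 1 j0 = 1 <;> by_cases h2 : s 2 j0 = 1 <;>
    simp (config := { failIfUnchanged := false }) only [h0, h1, h2, true_and, and_true, false_and, and_false, if_true, if_false,
      not_true, not_false_iff, if_neg, Finset.sum_const_zero, ite_true, ite_false] <;>
    simp (config := { failIfUnchanged := false }) only [hA, hB] <;> omega

/-- a Godsil–McKay partition of `Γ` induces a Godsil–McKay partition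
of `Γ ⋆ Δ` with Godsil–McKay cell `D × V(Δ)`. -/
theorem isGMPartition_unifiedProd {V W : Type*} [Fintype V] [DecidableEq V]
    [Fintype W] [DecidableEq W] [Nonempty W] (G : SimpleGraph V) (H : SimpleGraph W)
    (s : Fin 3 → Fin 3 → ℚ) (hs : ∀ i j, s i j = 0 ∨ s i j = 1) (hs00 : s 0 0 = 0)
    {t : ℕ} (C : Fin t → Finset V) (D : Finset V)
    (hGM : IsGMPartition G C D) :
    IsGMPartition (unifiedProd G H s)
      (fun c : Fin t × W => C c.1 ×ˢ ({c.2} : Finset W))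
      (D ×ˢ (Finset.univ : Finset W)) := by
  obtain ⟨⟨hCne, hDne, hpw, hCD, hcov⟩, hequit, hhalf⟩ := hGM
  refine ⟨⟨?_, ?_, ?_, ?_, ?_⟩, ?_, ?_⟩
  · intro c
    obtain ⟨a, ha⟩ := hCne c.1
    exact ⟨(a, c.2), Finset.mem_product.mpr ⟨ha, Finset.mem_singleton_self _⟩⟩
  · obtain ⟨a, ha⟩ := hDne
    obtain ⟨w⟩ := ‹Nonempty W›
    exact ⟨(a, w), Finset.mem_product.mpr ⟨ha, Finset.mem_univ w⟩⟩
  · intro c c' hne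
    rw [Finset.disjoint_left]
    rintro ⟨a, b⟩ hab hab'
    rw [Finset.mem_product, Finset.mem_singleton] at hab hab'
    by_cases h : c.1 = c'.1
    · exact hne (Prod.ext h (hab.2.symm.trans hab'.2))
    · exact (Finset.disjoint_left.mp (hpw h) hab.1) hab'.1
  · intro c
    rw [Finset.disjoint_left]
    rintro ⟨a, b⟩ hab habD
    rw [Finset.mem_product] at hab habD
    exact Finset.disjoint_left.mp (hCD c.1) hab.1 habD.1
  · rintro ⟨a, b⟩
    rcases hcov a with h | ⟨i, hi⟩
    · exact Or.inl (Finset.mem_product.mpr ⟨h, Finset.mem_univ b⟩)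
    · exact Or.inr ⟨(i, b), Finset.mem_product.mpr ⟨hi, Finset.mem_singleton_self _⟩⟩
  · rintro c c' ⟨x, w1⟩ hx ⟨y, w2⟩ hy
    rw [Finset.mem_product, Finset.mem_singleton] at hx hy
    obtain ⟨hx1, rfl⟩ := hx
    obtain ⟨hy1, rfl⟩ := hy
    rw [nbrCount_unifiedProd G H s hs00, nbrCount_unifiedProd G H s hs00]
    have hmem : (x ∈ C c'.1) = (y ∈ C c'.1) := by
      by_cases h : c.1 = c'.1
      · rw [← h]
        simp [hx1, hy1]
      · have hd := Finset.disjoint_left.mp (hpw h)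
        exact propext (iff_of_false (fun hh => hd hx1 hh) (fun hh => hd hy1 hh))
    simp only [hmem, hequit c.1 c'.1 x hx1 y hy1]
  · rintro ⟨x, w⟩ hx c
    rw [Finset.mem_product] at hx
    rw [nbrCount_unifiedProd G H s hs00]
    have hxc : x ∉ C c.1 := fun h => Finset.disjoint_left.mp (hCD c.1) h hx.1
    have hcard : (C c.1 ×ˢ ({c.2} : Finset W)).card = (C c.1).card := by simp
    rw [hcard]
    have hm := hhalf x hx.1 c.1
    have hle : nbrCount G x (C c.1) ≤ (C c.1).card := Finset.card_filter_le _ _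
    rcases hs 1 (idx3 H w c.2) with h1 | h1 <;> rcases hs 2 (idx3 H w c.2) with h2 | h2 <;>
      simp [hxc, h1, h2] <;> omega
end

section
/- Let Γ be a finite simple graph with a Godsil–McKay partition π = {C₁, …, C_t, D} (cell D) and characteristic matrix S of {C₁, …, C_t}, let Δ be a finite simple graph, and let ⋆ be the unified product of type with parameters s_{ij} ∈ {0,1}. For (x, w) ∈ D × V(Δ), l ∈ [t], and w' ∈ V(Δ), let j ∈ {0,1,2} be the unique index with (B_j)_{ww'} = 1 (where B₀ = I, B₁ = A(Δ), B₂ = J − I − A(Δ)). Then the ((x,w), C_l^{(w')})-entry of A(Γ ⋆ Δ)_𝔡 (S ⊗ I) equals s₂ⱼ·|C_l| if x has 0 neighbors in C_l, ((s₁ⱼ + s₂ⱼ)/2)·|C_l| if x has exactly |C_l|/2 neighbors in C_l, and s₁ⱼ·|C_l| if x has |C_l| neighbors in C_l (here A(Γ ⋆ Δ)_𝔡 is the restriction of A(Γ ⋆ Δ) to rows indexed by D × V(Δ) and columns indexed by (C₁ ∪ ⋯ ∪ C_t) × V(Δ)). -/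
open Classical Matrix Kronecker

/-- The restriction `A(Γ ⋆ Δ)_𝔡` of the adjacency matrix of a graph on `V × W`
to rows indexed by `D × W` and columns indexed by `(V \ D) × W`. -/
noncomputable def adjMDprod {V W : Type*} (P : SimpleGraph (V × W)) (D : Finset V) :
    Matrix {p : V × W // p.1 ∈ D} {q : V × W // q.1 ∉ D} ℚ :=
  Matrix.of fun p q => if P.Adj p.1 q.1 then 1 else 0

/-- The characteristic matrix `S ⊗ I` of the product partition
`{C l × {w'}}`, with rows indexed by `(V \ D) × W`. -/
noncomputable def charMatResProd {V W : Type*} {t : ℕ} (C : Fin t → Finset V)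
    (D : Finset V) : Matrix {q : V × W // q.1 ∉ D} (Fin t × W) ℚ :=
  Matrix.of fun q c => if q.1.1 ∈ C c.1 ∧ q.1.2 = c.2 then 1 else 0

/-- The product `A(Γ ⋆ Δ)_𝔡 ⬝ (S ⊗ I)`. -/
noncomputable def adjMDprodS {V W : Type*} [Fintype V] [Fintype W] {t : ℕ}
    (P : SimpleGraph (V × W)) (C : Fin t → Finset V) (D : Finset V) :
    Matrix {p : V × W // p.1 ∈ D} (Fin t × W) ℚ :=
  adjMDprod P D * charMatResProd C D

lemma relIdx_eq {V : Type*} (G : SimpleGraph V) {i i' : Fin 3} {x y : V}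
    (h : relOfIdx G i x y) (h' : relOfIdx G i' x y) : i = i' := by
  rcases h with ⟨hi, h⟩ | ⟨hi, h⟩ | ⟨hi, h1, h2⟩ <;>
    rcases h' with ⟨hi', h'⟩ | ⟨hi', h'⟩ | ⟨hi', h1', h2'⟩ <;> subst_vars <;>
    simp_all

lemma entry_pt {V W : Type*} (G : SimpleGraph V) (H : SimpleGraph W)
    (s : Fin 3 → Fin 3 → ℚ) (hs : ∀ i j, s i j = 0 ∨ s i j = 1)
    {j : Fin 3} {x y : V} {w w' : W} (hj : relOfIdx H j w w') (hxy : x ≠ y) :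
    (if (unifiedProd G H s).Adj (x, w) (y, w') then (1 : ℚ) else 0)
      = if G.Adj x y then s 1 j else s 2 j := by
  have hne : ((x, w) : V × W) ≠ (y, w') := fun h => hxy (congrArg Prod.fst h)
  by_cases hadj : G.Adj x y
  · rw [if_pos hadj]
    have hrel : relOfIdx G 1 x y := Or.inr (Or.inl ⟨rfl, hadj⟩)
    rcases hs 1 j with h0 | h1
    · rw [h0, if_neg]
      rintro ⟨-, i', j', hs', hi', hj'⟩
      have e1 : i' = 1 := relIdx_eq G hi' hrel
      have e2 : j' = j := relIdx_eq H hj' hj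
      rw [e1, e2, h0] at hs'
      exact zero_ne_one hs'
    · rw [h1, if_pos]
      exact ⟨hne, 1, j, h1, hrel, hj⟩
  · rw [if_neg hadj]
    have hrel : relOfIdx G 2 x y := Or.inr (Or.inr ⟨rfl, hxy, hadj⟩)
    rcases hs 2 j with h0 | h1
    · rw [h0, if_neg]
      rintro ⟨-, i', j', hs', hi', hj'⟩
      have e1 : i' = 2 := relIdx_eq G hi' hrel
      have e2 : j' = j := relIdx_eq H hj' hj
      rw [e1, e2, h0] at hs'
      exact zero_ne_one hs'
    · rw [h1, if_pos]
      exact ⟨hne, 2, j, h1, hrel, hj⟩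

/-- the entries of `A(Γ ⋆ Δ)_𝔡 (S ⊗ I)`. -/
theorem unifiedProd_adjMD_entries {V W : Type*} [Fintype V] [DecidableEq V]
    [Fintype W] [DecidableEq W] (G : SimpleGraph V) (H : SimpleGraph W)
    (s : Fin 3 → Fin 3 → ℚ) (hs : ∀ i j, s i j = 0 ∨ s i j = 1) (hs00 : s 0 0 = 0)
    {t : ℕ} (C : Fin t → Finset V) (D : Finset V) (hGM : IsGMPartition G C D)
    (x : V) (w : W) (hx : ((x, w) : V × W).1 ∈ D) (l : Fin t) (w' : W) (j : Fin 3)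
    (hj : relOfIdx H j w w') :
    (nbrCount G x (C l) = 0 →
      adjMDprodS (unifiedProd G H s) C D ⟨(x, w), hx⟩ (l, w')
        = s 2 j * ((C l).card : ℚ)) ∧
    (2 * nbrCount G x (C l) = (C l).card →
      adjMDprodS (unifiedProd G H s) C D ⟨(x, w), hx⟩ (l, w')
        = (s 1 j + s 2 j) / 2 * ((C l).card : ℚ)) ∧
    (nbrCount G x (C l) = (C l).card →
      adjMDprodS (unifiedProd G H s) C D ⟨(x, w), hx⟩ (l, w')
        = s 1 j * ((C l).card : ℚ)) := by
  classical
  letI : DecidableEq V := fun a b => Classical.propDecidable (a = b)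
  letI : DecidableEq W := fun a b => Classical.propDecidable (a = b)
  set P := unifiedProd G H s with hP
  have hdisj : Disjoint (C l) D := hGM.1.2.2.2.1 l
  set f : V × W → ℚ := fun q =>
    (if P.Adj (x, w) q then 1 else 0) * (if q.1 ∈ C l ∧ q.2 = w' then 1 else 0)
    with hf
  set n := nbrCount G x (C l) with hn
  set m := ((C l).filter fun y => ¬ G.Adj x y).card with hm
  have hnm : n + m = (C l).card := by
    rw [hn, hm, nbrCount]
    exact Finset.card_filter_add_card_filter_not _
  have key : adjMDprodS P C D ⟨(x, w), hx⟩ (l, w')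
      = (n : ℚ) * s 1 j + (m : ℚ) * s 2 j := by
    have hfe : ∀ q : {q : V × W // q.1 ∉ D},
        adjMDprod P D ⟨(x, w), hx⟩ q * charMatResProd C D q (l, w') = f q.1 := by
      intro q
      rw [hf]
      by_cases h1 : P.Adj (x, w) q.1 <;> by_cases h2 : q.1.1 ∈ C l ∧ q.1.2 = w' <;>
        simp [adjMDprod, charMatResProd, h1, h2]
    rw [adjMDprodS]
    change ∑ q, adjMDprod P D ⟨(x, w), hx⟩ q * charMatResProd C D q (l, w') = _
    refine (Finset.sum_congr rfl fun q _ => hfe q).trans ?_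
    refine ((Finset.sum_map Finset.univ (Function.Embedding.subtype _) f).symm).trans ?_
    refine (Finset.sum_subset (s₁ := (C l) ×ˢ ({w'} : Finset W)) ?_ ?_).symm.trans ?_
    · intro q hq
      rw [Finset.mem_product, Finset.mem_singleton] at hq
      simp only [Finset.mem_map, Function.Embedding.coe_subtype]
      exact ⟨⟨q, fun hqD => (Finset.disjoint_left.mp hdisj hq.1) hqD⟩,
        Finset.mem_univ _, rfl⟩
    · intro q _ hq
      rw [Finset.mem_product, Finset.mem_singleton] at hq
      show (if P.Adj (x, w) q then (1 : ℚ) else 0)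
        * (if q.1 ∈ C l ∧ q.2 = w' then 1 else 0) = 0
      rw [if_neg hq, mul_zero]
    have step3 : ∑ q ∈ (C l) ×ˢ ({w'} : Finset W), f q
        = ∑ y ∈ C l, (if G.Adj x y then s 1 j else s 2 j) := by
      rw [Finset.sum_product]
      refine Finset.sum_congr rfl fun y hy => ?_
      rw [Finset.sum_singleton]
      have hxy : x ≠ y := fun h =>
        (Finset.disjoint_left.mp hdisj hy) (h ▸ hx)
      have h2 : ((y, w') : V × W).1 ∈ C l ∧ ((y, w') : V × W).2 = w' := ⟨hy, rfl⟩
      show (if P.Adj (x, w) (y, w') then (1 : ℚ) else 0)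
          * (if ((y, w') : V × W).1 ∈ C l ∧ ((y, w') : V × W).2 = w' then 1 else 0)
        = if G.Adj x y then s 1 j else s 2 j
      rw [if_pos h2, mul_one]
      exact entry_pt G H s hs hj hxy
    rw [step3, Finset.sum_ite, Finset.sum_const, Finset.sum_const,
      nsmul_eq_mul, nsmul_eq_mul]
    rw [hn, hm, nbrCount]
  refine ⟨fun h0 => ?_, fun hhalf => ?_, fun hall => ?_⟩
  · have hm' : m = (C l).card := by omega
    rw [key, h0, hm']
    push_cast
    ring
  · have hm' : m = n := by omega
    have hc : ((C l).card : ℚ) = 2 * n := by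
      rw [← hhalf]; push_cast; ring
    rw [key, hm', hc]
    ring
  · have hm' : m = 0 := by omega
    rw [key, hall, hm']
    push_cast
    ring
end

section
/- Let Γ be a finite simple graph with a Godsil–McKay partition π = {C₁, …, C_t, D}. Let BD(Γ) denote the bipartite double of Γ, i.e., the Kronecker product Γ × K₂ (adjacency matrix A(Γ) ⊗ A(K₂)), and let Π = {C_i × {w} : i ∈ [t], w ∈ V(K₂)} ∪ {D × V(K₂)}. Then Π is a Godsil–McKay partition of BD(Γ) with Godsil–McKay cell D × V(K₂), and the bipartite double of sw_π Γ is isomorphic to sw_Π (BD(Γ)). -/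
open Classical Matrix Kronecker

/-- The bipartite double of `G`, i.e. the Kronecker product `G × K₂`, whose
adjacency matrix is `A(G) ⊗ A(K₂)`. -/
def bipartiteDouble {V : Type*} (G : SimpleGraph V) : SimpleGraph (V × Fin 2) where
  Adj p q := G.Adj p.1 q.1 ∧ p.2 ≠ q.2
  symm := by constructor; rintro p q ⟨h1, h2⟩; exact ⟨h1.symm, h2.symm⟩
  loopless := by constructor; rintro p ⟨h1, -⟩; exact G.loopless.irrefl _ h1

lemma nbrCount_double {V : Type*} (G : SimpleGraph V) (x : V) (a : Fin 2)
    (c : Finset V) (w : Fin 2) :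
    nbrCount (bipartiteDouble G) (x, a) (c ×ˢ ({w} : Finset (Fin 2))) =
      if a = w then 0 else nbrCount G x c := by
  unfold nbrCount
  have h1 : ((c ×ˢ ({w} : Finset (Fin 2))).filter fun p => (bipartiteDouble G).Adj (x, a) p)
      = (c ×ˢ ({w} : Finset (Fin 2))).filter fun p => G.Adj x p.1 ∧ a ≠ p.2 :=
    Finset.filter_congr fun p _ => Iff.rfl
  rw [h1, Finset.filter_product, Finset.card_product]
  by_cases hw : a = w
  · subst hw
    rw [if_pos rfl]
    simp [Finset.filter_singleton]
  · rw [if_neg hw, Finset.filter_singleton, if_pos hw, Finset.card_singleton, mul_one]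

lemma double_switch_cond {V : Type*} [Fintype V] (G : SimpleGraph V) {t : ℕ}
    (C : Fin t → Finset V) (D : Finset V) (hC : ∀ i, (C i).Nonempty)
    (x y : V) (a b : Fin 2) :
    (∃ c : Fin t × Fin 2,
        ((x, a) ∈ D ×ˢ (Finset.univ : Finset (Fin 2)) ∧
          (y, b) ∈ C c.1 ×ˢ ({c.2} : Finset (Fin 2)) ∧
          2 * nbrCount (bipartiteDouble G) (x, a) (C c.1 ×ˢ ({c.2} : Finset (Fin 2)))
            = (C c.1 ×ˢ ({c.2} : Finset (Fin 2))).card) ∨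
        ((y, b) ∈ D ×ˢ (Finset.univ : Finset (Fin 2)) ∧
          (x, a) ∈ C c.1 ×ˢ ({c.2} : Finset (Fin 2)) ∧
          2 * nbrCount (bipartiteDouble G) (y, b) (C c.1 ×ˢ ({c.2} : Finset (Fin 2)))
            = (C c.1 ×ˢ ({c.2} : Finset (Fin 2))).card))
    ↔ a ≠ b ∧ (∃ i, (x ∈ D ∧ y ∈ C i ∧ 2 * nbrCount G x (C i) = (C i).card) ∨
          (y ∈ D ∧ x ∈ C i ∧ 2 * nbrCount G y (C i) = (C i).card)) := by
  have hcard : ∀ (i : Fin t) (w : Fin 2),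
      (C i ×ˢ ({w} : Finset (Fin 2))).card = (C i).card := by
    intro i w; rw [Finset.card_product]; simp
  constructor
  · rintro ⟨⟨i, w⟩, h | h⟩
    · obtain ⟨hx, hy, hcnt⟩ := h
      simp only [Finset.mem_product, Finset.mem_singleton, Finset.mem_univ, and_true] at hx hy
      obtain ⟨hy1, hy2⟩ := hy
      subst hy2
      rw [nbrCount_double, hcard] at hcnt
      by_cases hab : a = b
      · rw [if_pos hab] at hcnt
        exact absurd hcnt.symm (by simpa using (hC i).card_pos.ne')
      · rw [if_neg hab] at hcnt
        exact ⟨hab, i, Or.inl ⟨hx, hy1, hcnt⟩⟩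
    · obtain ⟨hy, hx, hcnt⟩ := h
      simp only [Finset.mem_product, Finset.mem_singleton, Finset.mem_univ, and_true] at hx hy
      obtain ⟨hx1, hx2⟩ := hx
      subst hx2
      rw [nbrCount_double, hcard] at hcnt
      by_cases hab : b = a
      · rw [if_pos hab] at hcnt
        exact absurd hcnt.symm (by simpa using (hC i).card_pos.ne')
      · rw [if_neg hab] at hcnt
        exact ⟨fun h => hab h.symm, i, Or.inr ⟨hy, hx1, hcnt⟩⟩
  · rintro ⟨hab, i, h | h⟩
    · refine ⟨(i, b), Or.inl ⟨?_, ?_, ?_⟩⟩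
      · simp [h.1]
      · simp [h.2.1]
      · rw [nbrCount_double, hcard, if_neg hab]; exact h.2.2
    · refine ⟨(i, a), Or.inr ⟨?_, ?_, ?_⟩⟩
      · simp [h.1]
      · simp [h.2.1]
      · rw [nbrCount_double, hcard, if_neg (Ne.symm hab)]; exact h.2.2

/-- the induced partition is a Godsil–McKay partition of the
bipartite double, and the bipartite double of `sw_π Γ` is isomorphic to the
switch of the bipartite double of `Γ`. -/
theorem bipartiteDouble_switch_compat {V : Type*} [Fintype V] [DecidableEq V]
    (G : SimpleGraph V) {t : ℕ} (C : Fin t → Finset V) (D : Finset V)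
    (hGM : IsGMPartition G C D) :
    IsGMPartition (bipartiteDouble G)
        (fun c : Fin t × Fin 2 => C c.1 ×ˢ ({c.2} : Finset (Fin 2)))
        (D ×ˢ (Finset.univ : Finset (Fin 2)))
    ∧ Nonempty (bipartiteDouble (GMswitch G C D)
        ≃g GMswitch (bipartiteDouble G)
            (fun c : Fin t × Fin 2 => C c.1 ×ˢ ({c.2} : Finset (Fin 2)))
            (D ×ˢ (Finset.univ : Finset (Fin 2)))) := by
  obtain ⟨⟨hCne, hDne, hCdisj, hCD, hcov⟩, heq, hhalf⟩ := hGM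
  -- `S x y` : the switching condition of the base graph
  set S : V → V → Prop := fun x y =>
    ∃ i, (x ∈ D ∧ y ∈ C i ∧ 2 * nbrCount G x (C i) = (C i).card) ∨
          (y ∈ D ∧ x ∈ C i ∧ 2 * nbrCount G y (C i) = (C i).card) with hS
  have hSne : ∀ {x y : V}, S x y → x ≠ y := by
    rintro x y ⟨i, ⟨hx, hy, -⟩ | ⟨hy, hx, -⟩⟩ rfl
    · exact Finset.disjoint_left.mp (hCD i) hy hx
    · exact Finset.disjoint_left.mp (hCD i) hx hy
  refine ⟨⟨⟨?_, ?_, ?_, ?_, ?_⟩, ?_, ?_⟩, ?_⟩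
  · rintro ⟨i, w⟩
    obtain ⟨x, hx⟩ := hCne i
    exact ⟨(x, w), by simp [hx]⟩
  · obtain ⟨x, hx⟩ := hDne
    exact ⟨(x, 0), by simp [hx]⟩
  · rintro ⟨i, w⟩ ⟨j, u⟩ hne
    rw [Finset.disjoint_left]
    rintro ⟨x, c⟩ hx hy
    simp only [Finset.mem_product, Finset.mem_singleton] at hx hy
    by_cases hij : i = j
    · subst hij
      exact hne (by rw [Prod.ext_iff]; exact ⟨rfl, hx.2 ▸ hy.2.symm ▸ rfl⟩)
    · exact Finset.disjoint_left.mp (hCdisj hij) hx.1 hy.1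
  · rintro ⟨i, w⟩
    rw [Finset.disjoint_left]
    rintro ⟨x, c⟩ hx hy
    simp only [Finset.mem_product, Finset.mem_singleton, Finset.mem_univ, and_true] at hx hy
    exact Finset.disjoint_left.mp (hCD i) hx.1 hy
  · rintro ⟨x, c⟩
    rcases hcov x with hx | ⟨i, hi⟩
    · exact Or.inl (by simp [hx])
    · exact Or.inr ⟨(i, c), by simp [hi]⟩
  · rintro ⟨i, w⟩ ⟨j, u⟩ ⟨x, a⟩ hx ⟨y, b⟩ hy
    simp only [Finset.mem_product, Finset.mem_singleton] at hx hy
    obtain ⟨hx1, rfl⟩ := hx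
    obtain ⟨hy1, rfl⟩ := hy
    rw [nbrCount_double, nbrCount_double, heq i j x hx1 y hy1]
  · rintro ⟨x, a⟩ hx ⟨i, w⟩
    simp only [Finset.mem_product, Finset.mem_univ, and_true] at hx
    rw [nbrCount_double, Finset.card_product, Finset.card_singleton, mul_one]
    by_cases haw : a = w
    · rw [if_pos haw]; exact Or.inl rfl
    · rw [if_neg haw]; exact hhalf x hx i
  · refine ⟨⟨Equiv.refl _, ?_⟩⟩
    rintro ⟨x, a⟩ ⟨y, b⟩
    simp only [Equiv.coe_refl, id_eq]
    have hcond := double_switch_cond G C D hCne x y a b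
    constructor
    · rintro ⟨hne, hxor⟩
      rcases hxor with ⟨⟨hadj, hab⟩, hnT⟩ | ⟨hT, hn⟩
      · exact ⟨⟨hadj.ne, Or.inl ⟨hadj, fun hs => hnT (hcond.mpr ⟨hab, hs⟩)⟩⟩, hab⟩
      · obtain ⟨hab, hs⟩ := hcond.mp hT
        exact ⟨⟨hSne hs, Or.inr ⟨hs, fun h => hn ⟨h, hab⟩⟩⟩, hab⟩
    · rintro ⟨⟨hxy, hxor⟩, hab⟩
      refine ⟨fun h => hab (congrArg Prod.snd h), ?_⟩
      rcases hxor with ⟨hadj, hns⟩ | ⟨hs, hnadj⟩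
      · exact Or.inl ⟨⟨hadj, hab⟩, fun hT => hns (hcond.mp hT).2⟩
      · exact Or.inr ⟨hcond.mpr ⟨hab, hs⟩, fun h => hnadj h.1⟩
end

section
/- Let Γ be a finite simple graph with a Godsil–McKay partition π = {C₁, …, C_t, D}. Let EBD(Γ) denote the extended bipartite double of Γ, i.e., the graph on V(Γ) × V(K₂) with adjacency matrix (I ⊗ A(K₂)) + (A(Γ) ⊗ A(K₂)) (the product of Γ and K₂ of type [000;110;000]), and let Π = {C_i × {w} : i ∈ [t], w ∈ V(K₂)} ∪ {D × V(K₂)}. Then Π is a Godsil–McKay partition of EBD(Γ) with Godsil–McKay cell D × V(K₂), and the extended bipartite double of sw_π Γ is isomorphic to sw_Π (EBD(Γ)). -/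
open Classical Matrix Kronecker

/-- The extended bipartite double of `G` : the graph on `V × Fin 2` with
adjacency matrix `(I ⊗ A(K₂)) + (A(G) ⊗ A(K₂))`. -/
def extBipartiteDouble {V : Type*} (G : SimpleGraph V) : SimpleGraph (V × Fin 2) where
  Adj p q := (p.1 = q.1 ∨ G.Adj p.1 q.1) ∧ p.2 ≠ q.2
  symm := by
    constructor
    rintro p q ⟨h1 | h1, h2⟩
    · exact ⟨Or.inl h1.symm, h2.symm⟩
    · exact ⟨Or.inr h1.symm, h2.symm⟩
  loopless := by constructor; rintro p ⟨-, h2⟩; exact h2 rfl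

lemma EBD_adj {V : Type*} (G : SimpleGraph V) (p q : V × Fin 2) :
    (extBipartiteDouble G).Adj p q ↔ (p.1 = q.1 ∨ G.Adj p.1 q.1) ∧ p.2 ≠ q.2 := Iff.rfl

lemma GMswitch_adj {V ι : Type*} (G : SimpleGraph V) (C : ι → Finset V) (D : Finset V)
    (x y : V) : (GMswitch G C D).Adj x y ↔ x ≠ y ∧ Xor' (G.Adj x y)
    (∃ i, (x ∈ D ∧ y ∈ C i ∧ 2 * nbrCount G x (C i) = (C i).card) ∨
          (y ∈ D ∧ x ∈ C i ∧ 2 * nbrCount G y (C i) = (C i).card)) := Iff.rfl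

lemma filter_xeq_card {V : Type*} [DecidableEq V] (G : SimpleGraph V) (x : V) (s : Finset V) :
    (s.filter fun y => x = y ∨ G.Adj x y).card
      = nbrCount G x s + (if x ∈ s then 1 else 0) := by
  by_cases hx : x ∈ s
  · rw [if_pos hx]
    have h : (s.filter fun y => x = y ∨ G.Adj x y)
        = insert x (s.filter fun y => G.Adj x y) := by
      ext y
      simp only [Finset.mem_filter, Finset.mem_insert]
      constructor
      · rintro ⟨hy, rfl | h⟩
        · exact Or.inl rfl
        · exact Or.inr ⟨hy, h⟩
      · rintro (rfl | ⟨hy, h⟩)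
        · exact ⟨hx, Or.inl rfl⟩
        · exact ⟨hy, Or.inr h⟩
    rw [h, Finset.card_insert_of_notMem (by simp)]
    unfold nbrCount
    omega
  · rw [if_neg hx]
    unfold nbrCount
    congr 1
    ext y
    simp only [Finset.mem_filter]
    constructor
    · rintro ⟨hy, rfl | h⟩
      · exact absurd hy hx
      · exact ⟨hy, h⟩
    · rintro ⟨hy, h⟩
      exact ⟨hy, Or.inr h⟩

lemma nbrCount_EBD {V : Type*} [DecidableEq V] (G : SimpleGraph V)
    (x : V) (a w : Fin 2) (s : Finset V) :
    nbrCount (extBipartiteDouble G) (x, a) (s ×ˢ ({w} : Finset (Fin 2)))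
      = if w = a then 0
        else nbrCount G x s + (if x ∈ s then 1 else 0) := by
  unfold nbrCount
  by_cases hw : w = a
  · rw [if_pos hw]
    subst hw
    rw [Finset.card_eq_zero, Finset.filter_eq_empty_iff]
    rintro ⟨y, b⟩ hm
    simp only [Finset.mem_product, Finset.mem_singleton] at hm
    rw [EBD_adj]
    rintro ⟨-, hne⟩
    exact hne hm.2.symm
  · rw [if_neg hw]
    have h : ((s ×ˢ ({w} : Finset (Fin 2))).filter
          fun q => (extBipartiteDouble G).Adj (x, a) q)
        = (s.filter fun y => x = y ∨ G.Adj x y) ×ˢ ({w} : Finset (Fin 2)) := by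
      ext ⟨y, b⟩
      simp only [Finset.mem_filter, Finset.mem_product, Finset.mem_singleton, EBD_adj]
      constructor
      · rintro ⟨⟨hy, hb⟩, hadj, -⟩
        exact ⟨⟨hy, hadj⟩, hb⟩
      · rintro ⟨⟨hy, hadj⟩, hb⟩
        exact ⟨⟨hy, hb⟩, hadj, by simp [hb]; exact fun h => hw h.symm⟩
    rw [h, Finset.card_product, Finset.card_singleton, mul_one]
    exact (filter_xeq_card G x s).trans rfl
set_option maxHeartbeats 1000000 in
/-- the induced partition is a Godsil–McKay partition of the
extended bipartite double, and the extended bipartite double of `sw_π Γ` is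
isomorphic to the switch of the extended bipartite double of `Γ`. -/
theorem extBipartiteDouble_switch_compat {V : Type*} [Fintype V] [DecidableEq V]
    (G : SimpleGraph V) {t : ℕ} (C : Fin t → Finset V) (D : Finset V)
    (hGM : IsGMPartition G C D) :
    IsGMPartition (extBipartiteDouble G)
        (fun c : Fin t × Fin 2 => C c.1 ×ˢ ({c.2} : Finset (Fin 2)))
        (D ×ˢ (Finset.univ : Finset (Fin 2)))
    ∧ Nonempty (extBipartiteDouble (GMswitch G C D)
        ≃g GMswitch (extBipartiteDouble G)
            (fun c : Fin t × Fin 2 => C c.1 ×ˢ ({c.2} : Finset (Fin 2)))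
            (D ×ˢ (Finset.univ : Finset (Fin 2)))) := by
  obtain ⟨⟨hNe, hDne, hPd, hCD, hCov⟩, hEq, hHalf⟩ := hGM
  have hcard : ∀ (i : Fin t) (w : Fin 2),
      (C i ×ˢ ({w} : Finset (Fin 2))).card = (C i).card := by
    intro i w
    rw [Finset.card_product, Finset.card_singleton, mul_one]
  have hnD : ∀ x ∈ D, ∀ i, x ∉ C i := fun x hx i hxc =>
    Finset.disjoint_left.1 (hCD i) hxc hx
  have hnbrD : ∀ x ∈ D, ∀ (a w : Fin 2) (i : Fin t),
      nbrCount (extBipartiteDouble G) (x, a) (C i ×ˢ ({w} : Finset (Fin 2)))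
        = if w = a then 0 else nbrCount G x (C i) := by
    intro x hx a w i
    rw [nbrCount_EBD, if_neg (hnD x hx i), add_zero]
  constructor
  · refine ⟨⟨?_, ?_, ?_, ?_, ?_⟩, ?_, ?_⟩
    · intro c
      exact (hNe c.1).product (Finset.singleton_nonempty c.2)
    · exact hDne.product ⟨0, Finset.mem_univ 0⟩
    · rintro ⟨i, w⟩ ⟨j, w'⟩ hne
      rw [Finset.disjoint_left]
      rintro ⟨x, a⟩ h1 h2
      simp only [Finset.mem_product, Finset.mem_singleton] at h1 h2
      by_cases hij : i = j
      · subst hij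
        exact hne (by rw [Prod.mk.injEq]; exact ⟨rfl, h1.2.symm.trans h2.2⟩)
      · exact Finset.disjoint_left.1 (hPd hij) h1.1 h2.1
    · rintro ⟨i, w⟩
      rw [Finset.disjoint_left]
      rintro ⟨x, a⟩ h1 h2
      simp only [Finset.mem_product, Finset.mem_singleton] at h1 h2
      exact hnD x h2.1 i h1.1
    · rintro ⟨x, a⟩
      rcases hCov x with hx | ⟨i, hx⟩
      · exact Or.inl (Finset.mem_product.2 ⟨hx, Finset.mem_univ a⟩)
      · exact Or.inr ⟨(i, a), Finset.mem_product.2 ⟨hx, Finset.mem_singleton_self a⟩⟩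
    · rintro ⟨i, w⟩ ⟨j, w'⟩ ⟨x, a⟩ hxm ⟨y, b⟩ hym
      simp only [Finset.mem_product, Finset.mem_singleton] at hxm hym
      obtain ⟨hxC, haw⟩ := hxm
      obtain ⟨hyC, hbw⟩ := hym
      show nbrCount (extBipartiteDouble G) (x, a) (C j ×ˢ ({w'} : Finset (Fin 2)))
        = nbrCount (extBipartiteDouble G) (y, b) (C j ×ˢ ({w'} : Finset (Fin 2)))
      rw [nbrCount_EBD, nbrCount_EBD, haw, hbw]
      by_cases hw : w' = w
      · rw [if_pos hw, if_pos hw]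
      · rw [if_neg hw, if_neg hw, hEq i j x hxC y hyC]
        congr 1
        by_cases hij : i = j
        · subst hij
          rw [if_pos hxC, if_pos hyC]
        · rw [if_neg (fun h => Finset.disjoint_left.1 (hPd hij) hxC h),
            if_neg (fun h => Finset.disjoint_left.1 (hPd hij) hyC h)]
    · rintro ⟨x, a⟩ hxm ⟨i, w⟩
      simp only [Finset.mem_product, Finset.mem_univ, and_true] at hxm
      rw [show (fun c : Fin t × Fin 2 => C c.1 ×ˢ ({c.2} : Finset (Fin 2))) (i, w)
        = C i ×ˢ ({w} : Finset (Fin 2)) from rfl] at *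
      rw [hnbrD x hxm a w i, hcard]
      by_cases hw : w = a
      · rw [if_pos hw]; exact Or.inl rfl
      · rw [if_neg hw]; exact hHalf x hxm i
  · refine ⟨⟨Equiv.refl _, ?_⟩⟩
    rintro ⟨x, a⟩ ⟨y, b⟩
    have hS' : (∃ c : Fin t × Fin 2,
        ((x, a) ∈ D ×ˢ (Finset.univ : Finset (Fin 2)) ∧
          (y, b) ∈ C c.1 ×ˢ ({c.2} : Finset (Fin 2)) ∧
          2 * nbrCount (extBipartiteDouble G) (x, a) (C c.1 ×ˢ ({c.2} : Finset (Fin 2)))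
            = (C c.1 ×ˢ ({c.2} : Finset (Fin 2))).card) ∨
        ((y, b) ∈ D ×ˢ (Finset.univ : Finset (Fin 2)) ∧
          (x, a) ∈ C c.1 ×ˢ ({c.2} : Finset (Fin 2)) ∧
          2 * nbrCount (extBipartiteDouble G) (y, b) (C c.1 ×ˢ ({c.2} : Finset (Fin 2)))
            = (C c.1 ×ˢ ({c.2} : Finset (Fin 2))).card))
      ↔ (a ≠ b ∧ ∃ i, (x ∈ D ∧ y ∈ C i ∧ 2 * nbrCount G x (C i) = (C i).card) ∨
          (y ∈ D ∧ x ∈ C i ∧ 2 * nbrCount G y (C i) = (C i).card)) := by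
      constructor
      · rintro ⟨⟨i, w⟩, ⟨hxD, hyC, hhalf⟩ | ⟨hyD, hxC, hhalf⟩⟩
        · dsimp only at hhalf
          simp only [Finset.mem_product, Finset.mem_singleton, Finset.mem_univ,
            and_true] at hxD hyC
          obtain ⟨hyCi, hbw⟩ := hyC
          rw [hnbrD x hxD a w i, hcard] at hhalf
          by_cases hw : w = a
          · rw [if_pos hw] at hhalf
            exact absurd hhalf (by have := (hNe i).card_pos; omega)
          · rw [if_neg hw] at hhalf
            exact ⟨fun h => hw ((h.trans hbw).symm ▸ rfl),
              ⟨i, Or.inl ⟨hxD, hyCi, hhalf⟩⟩⟩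
        · dsimp only at hhalf
          simp only [Finset.mem_product, Finset.mem_singleton, Finset.mem_univ,
            and_true] at hyD hxC
          obtain ⟨hxCi, haw⟩ := hxC
          rw [hnbrD y hyD b w i, hcard] at hhalf
          by_cases hw : w = b
          · rw [if_pos hw] at hhalf
            exact absurd hhalf (by have := (hNe i).card_pos; omega)
          · rw [if_neg hw] at hhalf
            exact ⟨fun h => hw (haw ▸ h ▸ rfl) , ⟨i, Or.inr ⟨hyD, hxCi, hhalf⟩⟩⟩
      · rintro ⟨hab, i, ⟨hxD, hyC, hhalf⟩ | ⟨hyD, hxC, hhalf⟩⟩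
        · refine ⟨(i, b), Or.inl ⟨Finset.mem_product.2 ⟨hxD, Finset.mem_univ a⟩,
            Finset.mem_product.2 ⟨hyC, Finset.mem_singleton_self b⟩, ?_⟩⟩
          rw [hnbrD x hxD a b i, if_neg (fun h => hab h.symm), hcard]
          exact hhalf
        · refine ⟨(i, a), Or.inr ⟨Finset.mem_product.2 ⟨hyD, Finset.mem_univ b⟩,
            Finset.mem_product.2 ⟨hxC, Finset.mem_singleton_self a⟩, ?_⟩⟩
          rw [hnbrD y hyD b a i, if_neg (fun h => hab h), hcard]
          exact hhalf
    have hSxx : ∀ z : V, ¬ (∃ i, (z ∈ D ∧ z ∈ C i ∧ 2 * nbrCount G z (C i) = (C i).card) ∨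
        (z ∈ D ∧ z ∈ C i ∧ 2 * nbrCount G z (C i) = (C i).card)) := by
      rintro z ⟨i, ⟨hzD, hzC, -⟩ | ⟨hzD, hzC, -⟩⟩ <;> exact hnD z hzD i hzC
    simp only [Equiv.refl_apply, GMswitch_adj, EBD_adj]
    rw [hS']
    by_cases hab : a = b
    · subst hab
      simp [Xor']
    · have hpq : (x, a) ≠ (y, b) := fun h => hab (congrArg Prod.snd h)
      by_cases hxy : x = y
      · subst hxy
        have hS := hSxx x
        have hA : ¬ G.Adj x x := G.irrefl
        simp [Xor', hpq, hab, hS, hA]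
        exact fun hd i hc => absurd hc (hnD x hd i)
      · by_cases hA : G.Adj x y <;>
          by_cases hS : (∃ i, (x ∈ D ∧ y ∈ C i ∧ 2 * nbrCount G x (C i) = (C i).card) ∨
            (y ∈ D ∧ x ∈ C i ∧ 2 * nbrCount G y (C i) = (C i).card)) <;>
          simp [Xor', hpq, hab, hxy, hA, hS]
end

section
/- Let Γ be a finite simple graph with a Godsil–McKay partition π = {C₁, …, C_t, D}, let Δ be a finite simple graph, and let ⋆ be the unified product of type [010;110;110] (the clique extension type, with adjacency matrix (I ⊗ A(Δ)) + (A(Γ) ⊗ I) + (A(Γ) ⊗ A(Δ)) + ((J−I−A(Γ)) ⊗ I) + ((J−I−A(Γ)) ⊗ A(Δ))). Then, for the induced Godsil–McKay partition Π = {C_i × {w}} ∪ {D × V(Δ)} of Γ ⋆ Δ, every vertex of D × V(Δ) has either 0 or |C_i × {w}| neighbors in each cell C_i × {w}; consequently sw_Π(Γ ⋆ Δ) = Γ ⋆ Δ, i.e., switching with respect to Π does not change the graph. -/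
open Classical Matrix Kronecker

/-- The type `[010;110;110]` of the clique extension. -/
def sClique : Fin 3 → Fin 3 → ℚ := ![![0, 1, 0], ![1, 1, 0], ![1, 1, 0]]

lemma adj_clique {V W : Type*} (G : SimpleGraph V) (H : SimpleGraph W)
    {x y : V} {w w' : W} :
    (unifiedProd G H sClique).Adj (x, w) (y, w') ↔
      (x = y ∧ H.Adj w w') ∨ (x ≠ y ∧ (w = w' ∨ H.Adj w w')) := by
  constructor
  · rintro ⟨hne, i, j, hs, hi, hj⟩
    rcases hi with ⟨rfl, hx⟩ | ⟨rfl, hx⟩ | ⟨rfl, hx, hx'⟩ <;>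
      rcases hj with ⟨rfl, hw⟩ | ⟨rfl, hw⟩ | ⟨rfl, hw, hw'⟩ <;>
      [ (exact absurd hs (by norm_num [sClique, Matrix.vecHead, Matrix.vecTail]));
        (exact Or.inl ⟨hx, hw⟩);
        (exact absurd hs (by norm_num [sClique, Matrix.vecHead, Matrix.vecTail, Matrix.cons_val_two]));
        (exact Or.inr ⟨hx.ne, Or.inl hw⟩);
        (exact Or.inr ⟨hx.ne, Or.inr hw⟩);
        (exact absurd hs (by norm_num [sClique, Matrix.vecHead, Matrix.vecTail, Matrix.cons_val_two]));
        (exact Or.inr ⟨hx, Or.inl hw⟩);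
        (exact Or.inr ⟨hx, Or.inr hw⟩);
        (exact absurd hs (by norm_num [sClique, Matrix.vecHead, Matrix.vecTail, Matrix.cons_val_two]))]
  · rintro (⟨rfl, hadj⟩ | ⟨hne, hw⟩)
    · exact ⟨by simp [hadj.ne], 0, 1, by norm_num [sClique, Matrix.vecHead, Matrix.vecTail],
        Or.inl ⟨rfl, rfl⟩, Or.inr (Or.inl ⟨rfl, hadj⟩)⟩
    · have hpq : (x, w) ≠ (y, w') := fun h => hne (congrArg Prod.fst h)
      by_cases hg : G.Adj x y
      · rcases hw with rfl | hw
        · exact ⟨hpq, 1, 0, by norm_num [sClique, Matrix.vecHead, Matrix.vecTail],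
            Or.inr (Or.inl ⟨rfl, hg⟩), Or.inl ⟨rfl, rfl⟩⟩
        · exact ⟨hpq, 1, 1, by norm_num [sClique, Matrix.vecHead, Matrix.vecTail],
            Or.inr (Or.inl ⟨rfl, hg⟩), Or.inr (Or.inl ⟨rfl, hw⟩)⟩
      · rcases hw with rfl | hw
        · exact ⟨hpq, 2, 0, by norm_num [sClique, Matrix.vecHead, Matrix.vecTail, Matrix.cons_val_two],
            Or.inr (Or.inr ⟨rfl, hne, hg⟩), Or.inl ⟨rfl, rfl⟩⟩
        · exact ⟨hpq, 2, 1, by norm_num [sClique, Matrix.vecHead, Matrix.vecTail, Matrix.cons_val_two],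
            Or.inr (Or.inr ⟨rfl, hne, hg⟩), Or.inr (Or.inl ⟨rfl, hw⟩)⟩

lemma nbrCount_clique {V W : Type*} [DecidableEq V] [DecidableEq W]
    (G : SimpleGraph V) (H : SimpleGraph W) {t : ℕ} {C : Fin t → Finset V}
    {D : Finset V} (hdisj : ∀ i, Disjoint (C i) D)
    {x : V} (hx : x ∈ D) (w : W) (i : Fin t) (w' : W) :
    nbrCount (unifiedProd G H sClique) (x, w) (C i ×ˢ ({w'} : Finset W)) =
      if w = w' ∨ H.Adj w w' then (C i ×ˢ ({w'} : Finset W)).card else 0 := by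
  have key : ∀ p ∈ C i ×ˢ ({w'} : Finset W),
      (unifiedProd G H sClique).Adj (x, w) p ↔ (w = w' ∨ H.Adj w w') := by
    rintro ⟨y, u⟩ hp
    rw [Finset.mem_product, Finset.mem_singleton] at hp
    obtain ⟨hy, rfl⟩ := hp
    have hxy : x ≠ y := fun h => Finset.disjoint_left.mp (hdisj i) (h ▸ hy) hx
    rw [adj_clique]
    constructor
    · rintro (⟨h, _⟩ | ⟨_, h⟩)
      · exact absurd h hxy
      · exact h
    · exact fun h => Or.inr ⟨hxy, h⟩
  unfold nbrCount
  split
  · next h =>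
    rw [Finset.filter_true_of_mem fun p hp => (key p hp).mpr h]
  · next h =>
    rw [Finset.filter_false_of_mem fun p hp hadj => h ((key p hp).mp hadj),
      Finset.card_empty]

/-- for the clique-extension type, every vertex of the
Godsil–McKay cell `D × V(Δ)` has `0` or all neighbors in each induced cell, so
switching with respect to the induced partition does not change the product graph. -/
theorem cliqueExtension_switch_trivial {V W : Type*} [Fintype V] [DecidableEq V]
    [Fintype W] [DecidableEq W] (G : SimpleGraph V) (H : SimpleGraph W)
    {t : ℕ} (C : Fin t → Finset V) (D : Finset V)
    (hGM : IsGMPartition G C D) :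
    (∀ x ∈ D, ∀ w : W, ∀ (i : Fin t) (w' : W),
      nbrCount (unifiedProd G H sClique) (x, w) (C i ×ˢ ({w'} : Finset W)) = 0 ∨
      nbrCount (unifiedProd G H sClique) (x, w) (C i ×ˢ ({w'} : Finset W))
        = (C i ×ˢ ({w'} : Finset W)).card)
    ∧ GMswitch (unifiedProd G H sClique)
        (fun c : Fin t × W => C c.1 ×ˢ ({c.2} : Finset W))
        (D ×ˢ (Finset.univ : Finset W))
      = unifiedProd G H sClique := by
  obtain ⟨⟨hCne, -, -, hdisj, -⟩, -, -⟩ := hGM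
  have hfirst : ∀ x ∈ D, ∀ w : W, ∀ (i : Fin t) (w' : W),
      nbrCount (unifiedProd G H sClique) (x, w) (C i ×ˢ ({w'} : Finset W)) = 0 ∨
      nbrCount (unifiedProd G H sClique) (x, w) (C i ×ˢ ({w'} : Finset W))
        = (C i ×ˢ ({w'} : Finset W)).card := by
    intro x hx w i w'
    rw [nbrCount_clique G H hdisj hx]
    split
    · exact Or.inr rfl
    · exact Or.inl rfl
  refine ⟨hfirst, ?_⟩
  have hcardpos : ∀ (i : Fin t) (w' : W),
      0 < (C i ×ˢ ({w'} : Finset W)).card := by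
    intro i w'
    simp only [Finset.card_product, Finset.card_singleton, mul_one]
    exact (hCne i).card_pos
  have hnever : ∀ (p : V × W) (c : Fin t × W), p.1 ∈ D →
      ¬ (2 * nbrCount (unifiedProd G H sClique) p
          ((fun c : Fin t × W => C c.1 ×ˢ ({c.2} : Finset W)) c)
        = ((fun c : Fin t × W => C c.1 ×ˢ ({c.2} : Finset W)) c).card) := by
    rintro ⟨x, w⟩ ⟨i, w'⟩ hx heq
    dsimp only at heq
    rcases hfirst x hx w i w' with h0 | hall
    · rw [h0, mul_zero] at heq
      exact (hcardpos i w').ne (heq)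
    · rw [hall] at heq
      have := hcardpos i w'
      omega
  ext p q
  simp only [GMswitch]
  have hE : ¬ (∃ c : Fin t × W,
      (p ∈ D ×ˢ (Finset.univ : Finset W) ∧ q ∈ C c.1 ×ˢ ({c.2} : Finset W) ∧
        2 * nbrCount (unifiedProd G H sClique) p (C c.1 ×ˢ ({c.2} : Finset W))
          = (C c.1 ×ˢ ({c.2} : Finset W)).card) ∨
      (q ∈ D ×ˢ (Finset.univ : Finset W) ∧ p ∈ C c.1 ×ˢ ({c.2} : Finset W) ∧
        2 * nbrCount (unifiedProd G H sClique) q (C c.1 ×ˢ ({c.2} : Finset W))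
          = (C c.1 ×ˢ ({c.2} : Finset W)).card)) := by
    rintro ⟨c, ⟨hp, -, heq⟩ | ⟨hq, -, heq⟩⟩
    · exact hnever p c ((Finset.mem_product.mp hp).1) heq
    · exact hnever q c ((Finset.mem_product.mp hq).1) heq
  constructor
  · rintro ⟨hne, hxor⟩
    rcases hxor with ⟨ha, -⟩ | ⟨hE', -⟩
    · exact ha
    · exact absurd hE' hE
  · intro ha
    exact ⟨ha.ne, Or.inl ⟨ha, hE⟩⟩
end
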